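/- arXiv:1711.07765 — 4 statements merged into one kernel-verified Lean document; each statement's English description precedes it below -/
import Mathlib

section
/- For every element x of the complex Clifford group Γ(V,h), the twisted norm N(x) = τ̃_ℂ(x)·x is a nonzero complex scalar multiple of the identity, i.e. N(x) ∈ ℂ^×·1; moreover N restricts to a group homomorphism N: Γ(V,h) → ℂ^×, i.e. N(x·y) = N(x)·N(y) for all x,y ∈ Γ(V,h). -/
open scoped TensorProduct

noncomputable section

namespace CpxClifford

variable {V : Type*} [AddCommGroup V] [Module ℝ V]

/-- The complexified Clifford algebra `ℂl(V,h) = Cl(V,h) ⊗_ℝ ℂ` of a quadratic form. -/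
abbrev CCl (Q : QuadraticForm ℝ V) : Type _ := ℂ ⊗[ℝ] CliffordAlgebra Q

variable (Q : QuadraticForm ℝ V)

/-- The canonical embedding of `V` into the complexified Clifford algebra. -/
def ιC : V →ₗ[ℝ] CCl Q :=
  (Algebra.TensorProduct.includeRight :
      CliffordAlgebra Q →ₐ[ℝ] CCl Q).toLinearMap ∘ₗ CliffordAlgebra.ι Q

/-- The ℂ-linear extension `π_ℂ` of the parity (grade) involution. -/
def πC : CCl Q →ₐ[ℝ] CCl Q :=
  Algebra.TensorProduct.map (AlgHom.id ℝ ℂ) (CliffordAlgebra.involute)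

/-- The ℂ-antilinear extension `τ_ℂ` of the reversion anti-automorphism:
`τ_ℂ(z ⊗ x) = conj z ⊗ τ(x)`. -/
def τC : CCl Q →ₗ[ℝ] CCl Q :=
  TensorProduct.map (Complex.conjAe : ℂ ≃ₐ[ℝ] ℂ).toLinearMap CliffordAlgebra.reverse

/-- The twisted reversion `τ̃_ℂ = τ_ℂ ∘ π_ℂ`. -/
def τtC : CCl Q →ₗ[ℝ] CCl Q := τC Q ∘ₗ (πC Q).toLinearMap

/-- The twisted norm `N(x) = τ̃_ℂ(x) · x`. -/
def Nor (x : CCl Q) : CCl Q := τtC Q x * x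

/-- The twisted adjoint action `Ad~(x)(y) = π_ℂ(x) · y · x⁻¹` of a unit `x`. -/
def Adt (x : (CCl Q)ˣ) (y : CCl Q) : CCl Q := πC Q ↑x * y * ↑x⁻¹

/-- Membership in the complex Clifford group `Γ(V,h)`:
the twisted adjoint action preserves (the image of) `V`. -/
def memΓ (x : (CCl Q)ˣ) : Prop :=
  Adt Q x '' Set.range (ιC Q) = Set.range (ιC Q)

/-- Membership in the complex special Clifford group `Γˢ(V,h) = Γ(V,h) ∩ ℂl⁺(V,h)`:
the even elements of the complex Clifford group (even = fixed by the parity involution). -/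
def memΓs (x : (CCl Q)ˣ) : Prop :=
  memΓ Q x ∧ πC Q ↑x = (↑x : CCl Q)

open Classical in
/-- The complex scalar `c` such that `x = c·1`, when it exists (`0` otherwise). -/
def scalarOf (x : CCl Q) : ℂ :=
  if h : ∃ c : ℂ, x = algebraMap ℂ (CCl Q) c then h.choose else 0

/-- `|N(x)|`: the absolute value of the complex scalar `N(x)`. -/
def absN (x : CCl Q) : ℝ := ‖scalarOf Q (Nor Q x)‖

/-- Membership in `Pin^c(V,h) = {x ∈ Γ(V,h) : |N(x)| = 1}`. -/
def memPinc (x : (CCl Q)ˣ) : Prop := memΓ Q x ∧ absN Q ↑x = 1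

/-- Membership in `Spin^c(V,h) = {x ∈ Γˢ(V,h) : |N(x)| = 1}`. -/
def memSpinc (x : (CCl Q)ˣ) : Prop := memΓs Q x ∧ absN Q ↑x = 1

/-- The normalization map `r(x) = |N(x)|^{-1/2} · x`. -/
def rmap (x : CCl Q) : CCl Q := (Real.sqrt (absN Q x))⁻¹ • x

end CpxClifford


noncomputable section

namespace CliffordKernelAux

open CliffordAlgebra

variable {V : Type*} [AddCommGroup V] [Module ℝ V] {Q : QuadraticForm ℝ V}
variable {n : ℕ}

/-- The monomial attached to a word in basis indices. -/
def mono (e : Fin n → V) (w : List (Fin n)) : CliffordAlgebra Q :=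
  (w.map (fun i => ι Q (e i))).prod

@[simp] lemma mono_nil (e : Fin n → V) : (mono e [] : CliffordAlgebra Q) = 1 := rfl

@[simp] lemma mono_cons (e : Fin n → V) (i : Fin n) (w : List (Fin n)) :
    (mono e (i :: w) : CliffordAlgebra Q) = ι Q (e i) * mono e w := by
  simp [mono]

lemma mono_append (e : Fin n → V) (w₁ w₂ : List (Fin n)) :
    (mono e (w₁ ++ w₂) : CliffordAlgebra Q) = mono e w₁ * mono e w₂ := by
  simp [mono]

lemma span_mono (e : Module.Basis (Fin n) ℝ V) :
    Submodule.span ℝ (Set.range (mono (Q := Q) e)) = ⊤ := by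
  rw [eq_top_iff]
  rintro x -
  induction x using CliffordAlgebra.induction with
  | algebraMap r =>
      rw [Algebra.algebraMap_eq_smul_one]
      exact Submodule.smul_mem _ _ (Submodule.subset_span ⟨[], rfl⟩)
  | ι v =>
      have hv : v = ∑ i, e.repr v i • e i := (e.sum_repr v).symm
      rw [hv, map_sum]
      refine Submodule.sum_mem _ fun i _ => ?_
      rw [map_smul]
      exact Submodule.smul_mem _ _ (Submodule.subset_span ⟨[i], by simp⟩)
  | mul x y hx hy =>
      have := Submodule.mul_mem_mul hx hy
      rw [Submodule.span_mul_span] at this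
      refine Submodule.span_le.2 ?_ this
      rintro z ⟨a, ⟨w₁, rfl⟩, b, ⟨w₂, rfl⟩, rfl⟩
      exact Submodule.subset_span ⟨w₁ ++ w₂, (mono_append e w₁ w₂)⟩
  | add x y hx hy => exact Submodule.add_mem _ hx hy


section erase

lemma ι_anticomm {e : Fin n → V} (horth : ∀ i j : Fin n, i ≠ j → QuadraticMap.polar Q (e i) (e j) = 0)
    {i j : Fin n} (hij : i ≠ j) :
    ι Q (e i) * ι Q (e j) = - (ι Q (e j) * ι Q (e i)) := by
  have := ι_mul_ι_add_swap (Q := Q) (e i) (e j)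
  rw [horth i j hij, map_zero] at this
  exact eq_neg_of_add_eq_zero_left this

lemma ι_mul_mono_erase {e : Fin n → V}
    (horth : ∀ i j : Fin n, i ≠ j → QuadraticMap.polar Q (e i) (e j) = 0)
    (i : Fin n) :
    ∀ w : List (Fin n), i ∈ w →
      ∃ s : ℝ, ι Q (e i) * mono e w = s • (mono e (w.erase i) : CliffordAlgebra Q) := by
  intro w
  induction w with
  | nil => intro hmem; simp at hmem
  | cons j t ih =>
      intro hmem
      by_cases hji : j = i
      · subst hji
        refine ⟨Q (e j), ?_⟩
        rw [List.erase_cons_head, mono_cons, ← mul_assoc, ι_sq_scalar, ← Algebra.smul_def]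
      · have hit : i ∈ t := by
          rcases List.mem_cons.1 hmem with h | h
          · exact absurd h.symm hji
          · exact h
        obtain ⟨s, hs⟩ := ih hit
        refine ⟨-s, ?_⟩
        have herase : (j :: t).erase i = j :: t.erase i := by
          rw [List.erase_cons_tail]
          simp [hji]
        rw [herase, mono_cons, mono_cons, ← mul_assoc,
          ι_anticomm horth (fun h => hji h.symm), neg_mul, mul_assoc, hs,
          mul_smul_comm, ← neg_smul]

lemma all_even_scalar {e : Fin n → V}
    (horth : ∀ i j : Fin n, i ≠ j → QuadraticMap.polar Q (e i) (e j) = 0) :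
    ∀ (N : ℕ) (w : List (Fin n)), w.length ≤ N → (∀ i, Even (w.count i)) →
      ∃ r : ℝ, (mono e w : CliffordAlgebra Q) = algebraMap ℝ _ r := by
  intro N
  induction N with
  | zero =>
      intro w hw _
      have : w = [] := List.length_eq_zero_iff.1 (Nat.le_zero.1 hw)
      exact ⟨1, by simp [this]⟩
  | succ N ih =>
      intro w hw heven
      match w with
      | [] => exact ⟨1, by simp⟩
      | i :: t =>
          have hcount : (i :: t).count i = t.count i + 1 := by
            simp [List.count_cons]
          have hodd : ¬ Even (t.count i) := by
            have := heven i
            rw [hcount] at this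
            simpa [Nat.even_add_one] using this
          have hcz : t.count i ≠ 0 := fun hz => hodd (by simp [hz])
          have hit : i ∈ t := by
            by_contra hni
            exact hcz (List.count_eq_zero.2 hni)
          obtain ⟨s, hs⟩ := ι_mul_mono_erase horth i t hit
          have hlen : (t.erase i).length ≤ N := by
            have := List.length_erase_of_mem hit
            have hlt : t.length ≤ N := by simpa using Nat.succ_le_succ_iff.1 hw
            omega
          have heven' : ∀ j, Even ((t.erase i).count j) := by
            intro j
            by_cases hji : j = i
            · subst hji
              rw [List.count_erase_self]
              obtain ⟨k, hk⟩ := Nat.not_even_iff_odd.1 hodd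
              exact ⟨k, by omega⟩
            · rw [List.count_erase_of_ne hji]
              have := heven j
              rwa [List.count_cons_of_ne (Ne.symm hji)] at this
          obtain ⟨r, hr⟩ := ih (t.erase i) hlen heven'
          refine ⟨s * r, ?_⟩
          rw [mono_cons, hs, hr, map_mul, ← Algebra.smul_def]

end erase


section conj

variable {A : Type*} [Ring A] [Algebra ℝ A]

/-- Conjugation by a unit composed with `involute`, as a linear map. -/
def conjL (u : (CliffordAlgebra Q)ˣ) : CliffordAlgebra Q →ₗ[ℝ] CliffordAlgebra Q :=
  (LinearMap.mulLeft ℝ (↑u : CliffordAlgebra Q)).comp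
    ((LinearMap.mulRight ℝ (↑u⁻¹ : CliffordAlgebra Q)).comp
      (involute (Q := Q)).toLinearMap)

lemma conjL_apply (u : (CliffordAlgebra Q)ˣ) (x : CliffordAlgebra Q) :
    conjL u x = ↑u * involute x * ↑u⁻¹ := by
  simp [conjL, mul_assoc]

lemma conjL_mul (u : (CliffordAlgebra Q)ˣ) (x y : CliffordAlgebra Q) :
    conjL u (x * y) = conjL u x * conjL u y := by
  simp only [conjL_apply, map_mul]
  simp only [mul_assoc]
  rw [← mul_assoc (↑u⁻¹ : CliffordAlgebra Q) (↑u : CliffordAlgebra Q), u.inv_mul, one_mul]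

/-- The averaging projection attached to a unit. -/
def Pmap (u : (CliffordAlgebra Q)ˣ) : CliffordAlgebra Q →ₗ[ℝ] CliffordAlgebra Q :=
  (2 : ℝ)⁻¹ • (LinearMap.id + conjL u)

lemma Pmap_apply (u : (CliffordAlgebra Q)ˣ) (x : CliffordAlgebra Q) :
    Pmap u x = (2 : ℝ)⁻¹ • (x + conjL u x) := rfl

lemma Pmap_fixed {u : (CliffordAlgebra Q)ˣ} {x : CliffordAlgebra Q} (hx : conjL u x = x) :
    Pmap u x = x := by
  rw [Pmap_apply, hx, ← two_smul ℝ x, smul_smul]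
  norm_num

/-- Iterated averaging over a list of indices. -/
def Pcomp (u : Fin n → (CliffordAlgebra Q)ˣ) : List (Fin n) → CliffordAlgebra Q →ₗ[ℝ] CliffordAlgebra Q
  | [] => LinearMap.id
  | i :: l => (Pmap (u i)).comp (Pcomp u l)

@[simp] lemma Pcomp_cons (u : Fin n → (CliffordAlgebra Q)ˣ) (i : Fin n) (l : List (Fin n))
    (x : CliffordAlgebra Q) : Pcomp u (i :: l) x = Pmap (u i) (Pcomp u l x) := rfl

@[simp] lemma Pcomp_nil (u : Fin n → (CliffordAlgebra Q)ˣ) (x : CliffordAlgebra Q) :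
    Pcomp u [] x = x := rfl

lemma Pcomp_fixed (u : Fin n → (CliffordAlgebra Q)ˣ) (l : List (Fin n)) {x : CliffordAlgebra Q}
    (hx : ∀ i ∈ l, conjL (u i) x = x) : Pcomp u l x = x := by
  induction l with
  | nil => rfl
  | cons i l ih =>
      have h1 : Pcomp u l x = x := ih (fun j hj => hx j (List.mem_cons_of_mem _ hj))
      rw [Pcomp_cons, h1, Pmap_fixed (hx i List.mem_cons_self)]

end conj


section units

variable {e : Fin n → V}

/-- The invertible element attached to a basis vector of nonzero norm. -/
def uU (e : Fin n → V) (hQ : ∀ i, Q (e i) ≠ 0) (i : Fin n) : (CliffordAlgebra Q)ˣ where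
  val := ι Q (e i)
  inv := (Q (e i))⁻¹ • ι Q (e i)
  val_inv := by
    rw [mul_smul_comm, ι_sq_scalar, Algebra.algebraMap_eq_smul_one, smul_smul,
      inv_mul_cancel₀ (hQ i), one_smul]
  inv_val := by
    rw [smul_mul_assoc, ι_sq_scalar, Algebra.algebraMap_eq_smul_one, smul_smul,
      inv_mul_cancel₀ (hQ i), one_smul]

variable (hQ : ∀ i, Q (e i) ≠ 0)
variable (horth : ∀ i j : Fin n, i ≠ j → QuadraticMap.polar Q (e i) (e j) = 0)

include hQ

lemma conjL_uU_ι (i j : Fin n) (horth : ∀ i j : Fin n, i ≠ j → QuadraticMap.polar Q (e i) (e j) = 0) :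
    conjL (uU e hQ i) (ι Q (e j)) = if j = i then -(ι Q (e j)) else ι Q (e j) := by
  rw [conjL_apply]
  show ι Q (e i) * involute (ι Q (e j)) * ((Q (e i))⁻¹ • ι Q (e i)) = _
  rw [involute_ι]
  by_cases hji : j = i
  · subst hji
    rw [if_pos rfl, mul_neg, neg_mul, mul_smul_comm, mul_assoc, ι_sq_scalar,
      ← Algebra.commutes, ← Algebra.smul_def, smul_smul, inv_mul_cancel₀ (hQ j), one_smul]
  · rw [if_neg hji, mul_neg, ι_anticomm horth (fun hh => hji hh.symm), neg_neg,
      mul_smul_comm, mul_assoc, ι_sq_scalar, ← Algebra.commutes, ← Algebra.smul_def,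
      smul_smul, inv_mul_cancel₀ (hQ i), one_smul]

lemma conjL_uU_one (i : Fin n) : conjL (uU e hQ i) 1 = 1 := by
  rw [conjL_apply, map_one, mul_one, (uU e hQ i).mul_inv]

lemma conjL_uU_mono (horth : ∀ i j : Fin n, i ≠ j → QuadraticMap.polar Q (e i) (e j) = 0) (i : Fin n) (w : List (Fin n)) :
    conjL (uU e hQ i) (mono e w) = ((-1 : ℝ) ^ (w.count i)) • mono e w := by
  induction w with
  | nil => rw [mono_nil, conjL_uU_one hQ]; simp
  | cons j t ih =>
      rw [mono_cons, conjL_mul, ih, conjL_uU_ι hQ _ _ horth]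
      by_cases hji : j = i
      · subst hji
        rw [if_pos rfl, List.count_cons_self, pow_succ, mul_neg_one, neg_mul,
          mul_smul_comm, neg_smul]
      · rw [if_neg hji, List.count_cons_of_ne hji, mul_smul_comm]

lemma Pmap_uU_mono (horth : ∀ i j : Fin n, i ≠ j → QuadraticMap.polar Q (e i) (e j) = 0) (i : Fin n) (w : List (Fin n)) :
    Pmap (uU e hQ i) (mono e w) =
      if Even (w.count i) then (mono e w : CliffordAlgebra Q) else 0 := by
  rw [Pmap_apply, conjL_uU_mono hQ horth]
  by_cases hev : Even (w.count i)
  · rw [if_pos hev, hev.neg_one_pow, one_smul, ← two_smul ℝ, smul_smul]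
    norm_num
  · rw [if_neg hev, (Nat.not_even_iff_odd.1 hev).neg_one_pow, neg_one_smul, add_neg_cancel,
      smul_zero]

lemma Pcomp_uU_mono_cases (horth : ∀ i j : Fin n, i ≠ j → QuadraticMap.polar Q (e i) (e j) = 0) (l : List (Fin n)) (w : List (Fin n)) :
    Pcomp (uU e hQ) l (mono e w) = mono e w ∨ Pcomp (uU e hQ) l (mono e w) = 0 := by
  induction l with
  | nil => exact Or.inl rfl
  | cons i l ih =>
      rw [Pcomp_cons]
      rcases ih with hh | hh
      · rw [hh, Pmap_uU_mono hQ horth]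
        by_cases hev : Even (w.count i)
        · exact Or.inl (if_pos hev)
        · exact Or.inr (if_neg hev)
      · rw [hh, map_zero]
        exact Or.inr rfl

lemma Pcomp_uU_mono_zero (horth : ∀ i j : Fin n, i ≠ j → QuadraticMap.polar Q (e i) (e j) = 0) {l : List (Fin n)} {w : List (Fin n)}
    (hx : ∃ i ∈ l, ¬ Even (w.count i)) : Pcomp (uU e hQ) l (mono e w) = 0 := by
  induction l with
  | nil => simp at hx
  | cons i l ih =>
      rw [Pcomp_cons]
      obtain ⟨j, hjl, hjodd⟩ := hx
      by_cases hjl' : j ∈ l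
      · rw [ih ⟨j, hjl', hjodd⟩, map_zero]
      · have hji : j = i := by
          rcases List.mem_cons.1 hjl with hh | hh
          · exact hh
          · exact absurd hh hjl'
        subst hji
        rcases Pcomp_uU_mono_cases hQ horth l w with hh | hh
        · rw [hh, Pmap_uU_mono hQ horth, if_neg hjodd]
        · rw [hh, map_zero]

lemma Pcomp_uU_mono_mem (horth : ∀ i j : Fin n, i ≠ j → QuadraticMap.polar Q (e i) (e j) = 0) (w : List (Fin n)) :
    Pcomp (uU e hQ) (List.finRange n) (mono e w) ∈
      LinearMap.range (Algebra.linearMap ℝ (CliffordAlgebra Q)) := by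
  by_cases hall : ∀ i, Even (w.count i)
  · have h1 : ∀ i ∈ List.finRange n, conjL (uU e hQ i) (mono e w) = mono e w := by
      intro i _
      rw [conjL_uU_mono hQ horth, (hall i).neg_one_pow, one_smul]
    rw [Pcomp_fixed _ _ h1]
    obtain ⟨r, hr⟩ := all_even_scalar horth w.length w le_rfl hall
    exact ⟨r, hr.symm⟩
  · push_neg at hall
    obtain ⟨i, hi⟩ := hall
    rw [Pcomp_uU_mono_zero hQ horth ⟨i, List.mem_finRange i, hi⟩]
    exact Submodule.zero_mem _

end units

/-- The key kernel lemma: an element of the Clifford algebra of a nondegenerate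
symmetric bilinear form that twisted-commutes with every vector is a scalar. -/
theorem kernel_scalar [FiniteDimensional ℝ V] (h : LinearMap.BilinForm ℝ V)
    (hsymm : h.IsSymm) (hnd : h.Nondegenerate)
    (a : CliffordAlgebra h.toQuadraticMap)
    (H : ∀ v : V, ι h.toQuadraticMap v * a = involute a * ι h.toQuadraticMap v) :
    ∃ r : ℝ, a = algebraMap ℝ _ r := by
  haveI : Invertible (2 : ℝ) := invertibleOfNonzero two_ne_zero
  obtain ⟨e, he⟩ := LinearMap.BilinForm.exists_orthogonal_basis (LinearMap.BilinForm.isSymm_iff.1 hsymm)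
  have hQe : ∀ i, h.toQuadraticMap (e i) ≠ 0 := by
    intro i
    have h2 := LinearMap.BilinForm.iIsOrtho.not_isOrtho_basis_self_of_nondegenerate he hnd i
    simpa [LinearMap.BilinMap.toQuadraticMap_apply, LinearMap.isOrtho_def] using h2
  have horth : ∀ i j, i ≠ j →
      QuadraticMap.polar h.toQuadraticMap (e i) (e j) = 0 := by
    intro i j hij
    rw [LinearMap.BilinMap.polar_toQuadraticMap, LinearMap.isOrthoᵢ_def.1 he i j hij,
      LinearMap.isOrthoᵢ_def.1 he j i (Ne.symm hij), add_zero]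
  have hfix : ∀ i, conjL (uU e hQe i) a = a := by
    intro i
    rw [conjL_apply]
    show ι h.toQuadraticMap (e i) * involute a *
      ((h.toQuadraticMap (e i))⁻¹ • ι h.toQuadraticMap (e i)) = a
    rw [mul_smul_comm, mul_assoc, ← H (e i), ← mul_assoc, ι_sq_scalar,
      ← Algebra.smul_def, smul_smul, inv_mul_cancel₀ (hQe i), one_smul]
  have hPa : Pcomp (uU e hQe) (List.finRange _) a = a :=
    Pcomp_fixed _ _ (fun i _ => hfix i)
  have hmem : a ∈ LinearMap.range (Algebra.linearMap ℝ (CliffordAlgebra h.toQuadraticMap)) := by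
    rw [← hPa]
    have htop : a ∈ Submodule.span ℝ (Set.range (mono (Q := h.toQuadraticMap) e)) := by
      rw [span_mono e]; trivial
    refine Submodule.span_induction ?_ ?_ ?_ ?_ htop
    · rintro x ⟨w, rfl⟩
      exact Pcomp_uU_mono_mem hQe horth w
    · rw [map_zero]; exact Submodule.zero_mem _
    · intro x y _ _ hx hy
      rw [map_add]; exact Submodule.add_mem _ hx hy
    · intro r x _ hx
      rw [map_smul]; exact Submodule.smul_mem _ _ hx
  obtain ⟨r, hr⟩ := hmem
  exact ⟨r, hr.symm⟩

end CliffordKernelAux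





namespace CpxClifford

open CliffordAlgebra

variable {V : Type*} [AddCommGroup V] [Module ℝ V] (Q : QuadraticForm ℝ V)

lemma ιC_apply (v : V) : ιC Q v = (1 : ℂ) ⊗ₜ[ℝ] ι Q v := rfl

lemma πC_tmul (z : ℂ) (x : CliffordAlgebra Q) :
    πC Q (z ⊗ₜ[ℝ] x) = z ⊗ₜ[ℝ] involute x := rfl

lemma τC_tmul (z : ℂ) (x : CliffordAlgebra Q) :
    τC Q (z ⊗ₜ[ℝ] x) = (starRingEnd ℂ z) ⊗ₜ[ℝ] reverse (R := ℝ) x := rfl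

lemma τC_one : τC Q 1 = 1 := by
  rw [Algebra.TensorProduct.one_def, τC_tmul]
  simp

lemma τC_antimul (a b : CCl Q) : τC Q (a * b) = τC Q b * τC Q a := by
  induction a using TensorProduct.induction_on with
  | zero => simp
  | tmul z x =>
      induction b using TensorProduct.induction_on with
      | zero => simp
      | tmul w y =>
          rw [Algebra.TensorProduct.tmul_mul_tmul, τC_tmul, τC_tmul, τC_tmul,
            Algebra.TensorProduct.tmul_mul_tmul, map_mul, reverse.map_mul,
            mul_comm (starRingEnd ℂ w)]
      | add b₁ b₂ h1 h2 => rw [mul_add, map_add, h1, h2, map_add, add_mul]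
  | add a₁ a₂ h1 h2 => rw [add_mul, map_add, h1, h2, map_add, mul_add]

lemma πC_πC (a : CCl Q) : πC Q (πC Q a) = a := by
  induction a using TensorProduct.induction_on with
  | zero => simp
  | tmul z x => rw [πC_tmul, πC_tmul, involute_involute]
  | add a₁ a₂ h1 h2 => rw [map_add, map_add, h1, h2]

lemma πC_τC (a : CCl Q) : πC Q (τC Q a) = τC Q (πC Q a) := by
  induction a using TensorProduct.induction_on with
  | zero => simp
  | tmul z x => rw [τC_tmul, πC_tmul, πC_tmul, τC_tmul, reverse_involute]
  | add a₁ a₂ h1 h2 => rw [map_add, map_add, h1, h2, map_add, map_add]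

lemma τtC_apply (a : CCl Q) : τtC Q a = τC Q (πC Q a) := rfl

lemma τtC_one : τtC Q 1 = 1 := by
  rw [τtC_apply, map_one, τC_one]

lemma τtC_antimul (a b : CCl Q) : τtC Q (a * b) = τtC Q b * τtC Q a := by
  rw [τtC_apply, map_mul, τC_antimul, τtC_apply, τtC_apply]

lemma τtC_ιC (v : V) : τtC Q (ιC Q v) = - ιC Q v := by
  rw [τtC_apply, ιC_apply, πC_tmul, involute_ι, TensorProduct.tmul_neg, map_neg, τC_tmul,
    reverse_ι, map_one]

lemma πC_ιC (v : V) : πC Q (ιC Q v) = - ιC Q v := by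
  rw [ιC_apply, πC_tmul, involute_ι, TensorProduct.tmul_neg]

lemma τtC_πC (a : CCl Q) : τtC Q (πC Q a) = πC Q (τtC Q a) := by
  rw [τtC_apply, τtC_apply, πC_πC, ← πC_τC, πC_πC]

/-- `τ̃_ℂ` of a unit, as a unit. -/
def tunit (x : (CCl Q)ˣ) : (CCl Q)ˣ where
  val := τtC Q ↑x
  inv := τtC Q ↑x⁻¹
  val_inv := by rw [← τtC_antimul, x.inv_mul, τtC_one]
  inv_val := by rw [← τtC_antimul, x.mul_inv, τtC_one]

@[simp] lemma tunit_val (x : (CCl Q)ˣ) : (tunit Q x : CCl Q) = τtC Q ↑x := rfl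

@[simp] lemma tunit_inv_val (x : (CCl Q)ˣ) : ((tunit Q x)⁻¹ : (CCl Q)ˣ) = (τtC Q ↑x⁻¹ : CCl Q) := rfl

/-- Real part projection of the complexified Clifford algebra. -/
def reP : CCl Q →ₗ[ℝ] CliffordAlgebra Q :=
  TensorProduct.lift ((LinearMap.lsmul ℝ (CliffordAlgebra Q)).comp Complex.reLm)

/-- Imaginary part projection of the complexified Clifford algebra. -/
def imP : CCl Q →ₗ[ℝ] CliffordAlgebra Q :=
  TensorProduct.lift ((LinearMap.lsmul ℝ (CliffordAlgebra Q)).comp Complex.imLm)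

@[simp] lemma reP_tmul (z : ℂ) (x : CliffordAlgebra Q) : reP Q (z ⊗ₜ[ℝ] x) = z.re • x := rfl

@[simp] lemma imP_tmul (z : ℂ) (x : CliffordAlgebra Q) : imP Q (z ⊗ₜ[ℝ] x) = z.im • x := rfl

lemma decomp (m : CCl Q) : m = (1 : ℂ) ⊗ₜ[ℝ] reP Q m + Complex.I ⊗ₜ[ℝ] imP Q m := by
  induction m using TensorProduct.induction_on with
  | zero => simp
  | tmul z x =>
      rw [reP_tmul, imP_tmul]
      conv_lhs => rw [← Complex.re_add_im z]
      rw [TensorProduct.add_tmul]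
      congr 1 <;> rw [TensorProduct.tmul_smul, TensorProduct.smul_tmul'] <;>
        congr 1 <;> simp [Complex.real_smul]
  | add a b ha hb =>
      rw [map_add, map_add, TensorProduct.tmul_add, TensorProduct.tmul_add]
      conv_lhs => rw [ha, hb]
      abel

lemma reP_decomp (a b : CliffordAlgebra Q) :
    reP Q ((1 : ℂ) ⊗ₜ[ℝ] a + Complex.I ⊗ₜ[ℝ] b) = a := by
  simp

lemma imP_decomp (a b : CliffordAlgebra Q) :
    imP Q ((1 : ℂ) ⊗ₜ[ℝ] a + Complex.I ⊗ₜ[ℝ] b) = b := by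
  simp

lemma nontrivial_CCl : Nontrivial (CCl Q) := by
  haveI : Invertible (2 : ℝ) := invertibleOfNonzero two_ne_zero
  haveI : Nonempty (Module.Free.ChooseBasisIndex ℝ (CliffordAlgebra Q)) :=
    (Module.Free.chooseBasis ℝ (CliffordAlgebra Q)).index_nonempty
  let b := Complex.basisOneI.tensorProduct (Module.Free.chooseBasis ℝ (CliffordAlgebra Q))
  exact ⟨b (0, Classical.arbitrary _), 0, b.ne_zero _⟩

end CpxClifford


namespace CpxClifford

open CliffordAlgebra

variable {V : Type*} [AddCommGroup V] [Module ℝ V] (Q : QuadraticForm ℝ V)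

set_option maxHeartbeats 1000000 in
lemma Nor_commute (x : (CCl Q)ˣ) (hx : memΓ Q x) (v : V) :
    πC Q (Nor Q ↑x) * ιC Q v = ιC Q v * Nor Q ↑x := by
  have hmem : Adt Q x (ιC Q v) ∈ Set.range (ιC Q) := by
    rw [← hx]; exact Set.mem_image_of_mem _ ⟨v, rfl⟩
  obtain ⟨w, hw⟩ := hmem
  rw [Adt] at hw
  have hw' : πC Q ↑x * ιC Q v = ιC Q w * ↑x := by
    rw [hw, Units.inv_mul_cancel_right]
  have h1 : τtC Q (ιC Q w) = τtC Q (πC Q ↑x * ιC Q v * ↑x⁻¹) := by rw [hw]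
  rw [τtC_ιC, τtC_antimul, τtC_antimul, τtC_ιC, τtC_πC] at h1
  have h2 : ιC Q w = τtC Q ↑x⁻¹ * (ιC Q v * πC Q (τtC Q ↑x)) := by
    refine neg_injective ?_
    rw [h1, ← mul_neg, ← neg_mul]
  have hTw : τtC Q ↑x * ιC Q w = ιC Q v * πC Q (τtC Q ↑x) := by
    rw [h2, ← tunit_inv_val, ← tunit_val Q x, Units.mul_inv_cancel_left]
  have hTw2 : πC Q (τtC Q ↑x) * ιC Q w = ιC Q v * τtC Q ↑x := by
    have h3 := congrArg (πC Q) hTw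
    rw [map_mul, map_mul, πC_ιC, πC_ιC, πC_πC] at h3
    refine neg_injective ?_
    rw [← mul_neg, ← neg_mul]
    exact h3
  have hNor : Nor Q ↑x = τtC Q ↑x * ↑x := rfl
  rw [hNor, map_mul]
  calc πC Q (τtC Q ↑x) * πC Q ↑x * ιC Q v
      = πC Q (τtC Q ↑x) * (ιC Q w * ↑x) := by rw [mul_assoc, hw']
    _ = (πC Q (τtC Q ↑x) * ιC Q w) * ↑x := by rw [mul_assoc]
    _ = (ιC Q v * τtC Q ↑x) * ↑x := by rw [hTw2]
    _ = ιC Q v * (τtC Q ↑x * ↑x) := by rw [mul_assoc]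
end CpxClifford

open CpxClifford CliffordAlgebra in
lemma Nor_scalar_aux {V : Type*} [AddCommGroup V] [Module ℝ V] [FiniteDimensional ℝ V]
    (h : LinearMap.BilinForm ℝ V) (hsymm : h.IsSymm) (hnd : h.Nondegenerate)
    (x : (CCl h.toQuadraticMap)ˣ) (hx : memΓ h.toQuadraticMap x) :
    ∃ c : ℂ, c ≠ 0 ∧ Nor h.toQuadraticMap ↑x = algebraMap ℂ (CCl h.toQuadraticMap) c := by
  haveI := nontrivial_CCl h.toQuadraticMap
  have key := Nor_commute h.toQuadraticMap x hx
  set N : CCl h.toQuadraticMap := Nor h.toQuadraticMap ↑x with hNdef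
  set a := reP h.toQuadraticMap N with ha
  set b := imP h.toQuadraticMap N with hb
  have hN : N = (1 : ℂ) ⊗ₜ[ℝ] a + Complex.I ⊗ₜ[ℝ] b := decomp _ N
  have hcond : ∀ v : V, (involute a * ι h.toQuadraticMap v = ι h.toQuadraticMap v * a) ∧
      (involute b * ι h.toQuadraticMap v = ι h.toQuadraticMap v * b) := by
    intro v
    have hk := key v
    rw [hN] at hk
    rw [map_add, πC_tmul, πC_tmul, ιC_apply, add_mul, mul_add,
      Algebra.TensorProduct.tmul_mul_tmul, Algebra.TensorProduct.tmul_mul_tmul,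
      Algebra.TensorProduct.tmul_mul_tmul, Algebra.TensorProduct.tmul_mul_tmul] at hk
    simp only [one_mul, mul_one] at hk
    constructor
    · have := congrArg (reP h.toQuadraticMap) hk
      rwa [reP_decomp, reP_decomp] at this
    · have := congrArg (imP h.toQuadraticMap) hk
      rwa [imP_decomp, imP_decomp] at this
  obtain ⟨r, hr⟩ := CliffordKernelAux.kernel_scalar h hsymm hnd a (fun v => ((hcond v).1).symm)
  obtain ⟨s, hs⟩ := CliffordKernelAux.kernel_scalar h hsymm hnd b (fun v => ((hcond v).2).symm)
  refine ⟨(r : ℂ) + (s : ℂ) * Complex.I, ?_, ?_⟩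
  · intro hc
    have hN0 : N = 0 := by
      rw [hN, hr, hs]
      have h0 : (1 : ℂ) ⊗ₜ[ℝ] (algebraMap ℝ (CliffordAlgebra h.toQuadraticMap) r) +
          Complex.I ⊗ₜ[ℝ] (algebraMap ℝ (CliffordAlgebra h.toQuadraticMap) s) =
          ((r : ℂ) + (s : ℂ) * Complex.I) ⊗ₜ[ℝ] 1 := by
        rw [Algebra.algebraMap_eq_smul_one, Algebra.algebraMap_eq_smul_one,
          TensorProduct.tmul_smul, TensorProduct.tmul_smul, TensorProduct.add_tmul,
          TensorProduct.smul_tmul', TensorProduct.smul_tmul']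
        congr 2 <;> simp [Complex.real_smul]
      rw [h0, hc, TensorProduct.zero_tmul]
    have : ((tunit h.toQuadraticMap x * x : (CCl h.toQuadraticMap)ˣ) : CCl h.toQuadraticMap) = 0 := by
      rw [Units.val_mul, tunit_val]
      exact hN0
    exact Units.ne_zero _ this
  · rw [hN, hr, hs, Algebra.TensorProduct.algebraMap_apply]
    have h1 : algebraMap ℂ ℂ ((r : ℂ) + (s : ℂ) * Complex.I) = (r : ℂ) + (s : ℂ) * Complex.I := by
      simp
    rw [h1, Algebra.algebraMap_eq_smul_one, Algebra.algebraMap_eq_smul_one,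
      TensorProduct.tmul_smul, TensorProduct.tmul_smul, TensorProduct.add_tmul,
      TensorProduct.smul_tmul', TensorProduct.smul_tmul']
    congr 2 <;> simp [Complex.real_smul]


end

open CpxClifford in
/-- For every element `x` of the complex Clifford group `Γ(V,h)`, the twisted norm
`N(x) = τ̃_ℂ(x)·x` is a nonzero complex scalar multiple of the identity; moreover `N`
restricts to a group homomorphism `Γ(V,h) → ℂˣ`, i.e. it is multiplicative on `Γ(V,h)`. -/
theorem twisted_norm_scalar_and_multiplicative_on_clifford_group
    {V : Type*} [AddCommGroup V] [Module ℝ V] [FiniteDimensional ℝ V]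
    (h : LinearMap.BilinForm ℝ V) (hsymm : h.IsSymm) (hnd : h.Nondegenerate) :
    (∀ x : (CCl h.toQuadraticMap)ˣ, memΓ h.toQuadraticMap x →
        ∃ c : ℂ, c ≠ 0 ∧
          Nor h.toQuadraticMap ↑x = algebraMap ℂ (CCl h.toQuadraticMap) c) ∧
    (∀ x y : (CCl h.toQuadraticMap)ˣ, memΓ h.toQuadraticMap x → memΓ h.toQuadraticMap y →
        Nor h.toQuadraticMap (↑(x * y) : CCl h.toQuadraticMap) =
          Nor h.toQuadraticMap ↑x * Nor h.toQuadraticMap ↑y) := by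
  refine ⟨fun x hx => Nor_scalar_aux h hsymm hnd x hx, fun x y hx hy => ?_⟩
  obtain ⟨c, -, hc⟩ := Nor_scalar_aux h hsymm hnd x hx
  obtain ⟨c', -, hc'⟩ := Nor_scalar_aux h hsymm hnd y hy
  have hτx : τtC h.toQuadraticMap ↑x * ↑x = algebraMap ℂ _ c := hc
  rw [Units.val_mul, Nor, τtC_antimul]
  calc (τtC h.toQuadraticMap ↑y * τtC h.toQuadraticMap ↑x) * (↑x * ↑y)
      = τtC h.toQuadraticMap ↑y * ((τtC h.toQuadraticMap ↑x * ↑x) * ↑y) := by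
        rw [mul_assoc, mul_assoc]
    _ = τtC h.toQuadraticMap ↑y * (algebraMap ℂ _ c * ↑y) := by rw [hτx]
    _ = τtC h.toQuadraticMap ↑y * (↑y * algebraMap ℂ _ c) := by rw [Algebra.commutes]
    _ = (τtC h.toQuadraticMap ↑y * ↑y) * algebraMap ℂ _ c := by rw [mul_assoc]
    _ = Nor h.toQuadraticMap ↑x * Nor h.toQuadraticMap ↑y := by
        have hτy : τtC h.toQuadraticMap ↑y * ↑y = algebraMap ℂ _ c' := hc'
        rw [hτy, ← map_mul, hc, hc', ← map_mul, mul_comm c' c]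
end
end

section
/- Let γ: Cl(V,h) → End_ℂ(S) and γ': Cl(V',h') → End_ℂ(S') be weakly faithful complex Clifford representations, and let φ: S → S' be a ℂ-linear isomorphism such that conjugation by φ maps the subspace γ(ι(V)) onto γ'(ι'(V')). Then there is a unique linear map φ₀: V → V' satisfying γ'(ι'(φ₀(v))) = φ∘γ(ι(v))∘φ^{-1} for all v ∈ V; this φ₀ is a bijective isometry from (V,h) to (V',h'), and (φ₀,φ) is an isomorphism of complex Clifford representations from γ to γ'. Moreover φ₀ is the unique isometry for which (φ₀,φ) is a morphism of complex Clifford representations. -/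
noncomputable section


namespace CpxCliffordRep

/-- The image `γ(ι(V))` of `V` in `End_ℂ(S)` under a complex Clifford representation. -/
def gammaV {V : Type*} [AddCommGroup V] [Module ℝ V]
    {S : Type*} [AddCommGroup S] [Module ℝ S] [Module ℂ S] [IsScalarTower ℝ ℂ S]
    (Q : QuadraticForm ℝ V) (γ : CliffordAlgebra Q →ₐ[ℝ] Module.End ℂ S) :
    Set (Module.End ℂ S) :=
  Set.range fun v : V => γ (CliffordAlgebra.ι Q v)

/-- A complex Clifford representation is weakly faithful if `v ↦ γ(ι(v))` is injective. -/
def WeaklyFaithful {V : Type*} [AddCommGroup V] [Module ℝ V]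
    {S : Type*} [AddCommGroup S] [Module ℝ S] [Module ℂ S] [IsScalarTower ℝ ℂ S]
    (Q : QuadraticForm ℝ V) (γ : CliffordAlgebra Q →ₐ[ℝ] Module.End ℂ S) : Prop :=
  Function.Injective fun v : V => γ (CliffordAlgebra.ι Q v)

/-- Conjugation `A ↦ φ ∘ A ∘ φ⁻¹` by a ℂ-linear isomorphism `φ : S ≃ S'`. -/
def conjMap {S S' : Type*} [AddCommGroup S] [Module ℂ S] [AddCommGroup S'] [Module ℂ S']
    (φ : S ≃ₗ[ℂ] S') (A : Module.End ℂ S) : Module.End ℂ S' :=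
  φ.toLinearMap ∘ₗ A ∘ₗ φ.symm.toLinearMap

/-- `(φ₀, φ)` is a morphism of complex Clifford representations from `γ` to `γ'`:
`φ₀` is an isometry from `(V,h)` to `(V',h')` and
`γ'(Cl(φ₀)(x)) ∘ φ = φ ∘ γ(x)` for all `x ∈ Cl(V,h)`, where `Cl(φ₀)` is the (unique)
unital algebra morphism induced by `φ₀`, characterized by `Cl(φ₀)(ι(v)) = ι'(φ₀(v))`. -/
def IsRepMor {V V' : Type*} [AddCommGroup V] [Module ℝ V] [AddCommGroup V'] [Module ℝ V']
    {S S' : Type*} [AddCommGroup S] [Module ℝ S] [Module ℂ S] [IsScalarTower ℝ ℂ S]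
    [AddCommGroup S'] [Module ℝ S'] [Module ℂ S'] [IsScalarTower ℝ ℂ S']
    (h : LinearMap.BilinForm ℝ V) (h' : LinearMap.BilinForm ℝ V')
    (γ : CliffordAlgebra h.toQuadraticMap →ₐ[ℝ] Module.End ℂ S)
    (γ' : CliffordAlgebra h'.toQuadraticMap →ₐ[ℝ] Module.End ℂ S')
    (φ₀ : V →ₗ[ℝ] V') (φ : S →ₗ[ℂ] S') : Prop :=
  (∀ v w : V, h' (φ₀ v) (φ₀ w) = h v w) ∧
  ∃ Φ : CliffordAlgebra h.toQuadraticMap →ₐ[ℝ] CliffordAlgebra h'.toQuadraticMap,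
    (∀ v : V, Φ (CliffordAlgebra.ι h.toQuadraticMap v) =
        CliffordAlgebra.ι h'.toQuadraticMap (φ₀ v)) ∧
    ∀ x : CliffordAlgebra h.toQuadraticMap, (γ' (Φ x)) ∘ₗ φ = φ ∘ₗ (γ x)

/-- Membership in the complex Lipschitz group `L_γ` of a (weakly faithful) complex Clifford
representation: conjugation by `φ` preserves `γ(ι(V))`. -/
def memLip {V : Type*} [AddCommGroup V] [Module ℝ V]
    {S : Type*} [AddCommGroup S] [Module ℝ S] [Module ℂ S] [IsScalarTower ℝ ℂ S]
    (Q : QuadraticForm ℝ V) (γ : CliffordAlgebra Q →ₐ[ℝ] Module.End ℂ S)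
    (φ : S ≃ₗ[ℂ] S) : Prop :=
  conjMap φ '' gammaV Q γ = gammaV Q γ

/-- A complex Clifford representation is irreducible if the only invariant complex
subspaces of `S` are `0` and `S`. -/
def IsIrred {V : Type*} [AddCommGroup V] [Module ℝ V]
    {S : Type*} [AddCommGroup S] [Module ℝ S] [Module ℂ S] [IsScalarTower ℝ ℂ S]
    (Q : QuadraticForm ℝ V) (γ : CliffordAlgebra Q →ₐ[ℝ] Module.End ℂ S) : Prop :=
  ∀ W : Submodule ℂ S, (∀ (x : CliffordAlgebra Q), ∀ w ∈ W, γ x w ∈ W) → W = ⊥ ∨ W = ⊤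

/-- `(V,h)` has signature `(p,q)`: there is a basis `e₁,…,e_{p+q}` with
`h(eᵢ,eⱼ) = 0` for `i ≠ j`, `h(eᵢ,eᵢ) = 1` for `i ≤ p` and `h(eᵢ,eᵢ) = -1` for `i > p`. -/
def HasSignature {V : Type*} [AddCommGroup V] [Module ℝ V]
    (h : LinearMap.BilinForm ℝ V) (p q : ℕ) : Prop :=
  ∃ b : Module.Basis (Fin (p + q)) ℝ V, ∀ i j : Fin (p + q),
    h (b i) (b j) = if i = j then (if (i : ℕ) < p then 1 else -1) else 0

end CpxCliffordRep

namespace CpxCliffordRepAux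

variable {S S' : Type*} [AddCommGroup S] [Module ℝ S] [Module ℂ S] [IsScalarTower ℝ ℂ S]
  [AddCommGroup S'] [Module ℝ S'] [Module ℂ S'] [IsScalarTower ℝ ℂ S']

/-- Conjugation by a ℂ-linear equivalence as an ℝ-algebra homomorphism. -/
noncomputable def conjAlg (φ : S ≃ₗ[ℂ] S') : Module.End ℂ S →ₐ[ℝ] Module.End ℂ S' :=
  AlgHom.ofLinearMap ((φ.conj.restrictScalars ℝ).toLinearMap)
    (by ext s; simp [LinearEquiv.conj_apply])
    (by intro A B; ext s; simp [LinearEquiv.conj_apply, Module.End.mul_apply])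

lemma conjAlg_apply (φ : S ≃ₗ[ℂ] S') (A : Module.End ℂ S) :
    conjAlg φ A = φ.toLinearMap ∘ₗ A ∘ₗ φ.symm.toLinearMap := by
  simp [conjAlg, LinearEquiv.conj_apply, LinearMap.comp_assoc]

lemma scal_inj [Nontrivial S'] : Function.Injective (algebraMap ℝ (Module.End ℂ S')) := by
  intro r r' hrr
  obtain ⟨s, hs⟩ := exists_ne (0 : S')
  have h1 : (r : ℂ) • s = (r' : ℂ) • s := by
    have := LinearMap.congr_fun hrr s
    simpa [IsScalarTower.algebraMap_apply ℝ ℂ (Module.End ℂ S'),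
      Module.algebraMap_end_apply, Complex.coe_algebraMap] using this
  have := smul_left_injective ℂ hs h1
  exact_mod_cast this

end CpxCliffordRepAux

open CpxCliffordRep in
/-- If `γ, γ'` are weakly faithful and conjugation by a ℂ-linear isomorphism `φ : S ≃ S'`
maps `γ(ι(V))` onto `γ'(ι'(V'))`, then there is a unique linear map `φ₀ : V → V'` with
`γ'(ι'(φ₀(v))) = φ∘γ(ι(v))∘φ⁻¹` for all `v`; this `φ₀` is a bijective isometry and
`(φ₀,φ)` is an isomorphism of complex Clifford representations; moreover `φ₀` is the
unique isometry making `(φ₀,φ)` a morphism. -/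
theorem exists_unique_isometry_of_conj_maps_gammaV
    {V V' : Type*} [AddCommGroup V] [Module ℝ V] [FiniteDimensional ℝ V]
    [AddCommGroup V'] [Module ℝ V'] [FiniteDimensional ℝ V']
    {S S' : Type*} [AddCommGroup S] [Module ℝ S] [Module ℂ S] [IsScalarTower ℝ ℂ S]
    [FiniteDimensional ℂ S] [Nontrivial S]
    [AddCommGroup S'] [Module ℝ S'] [Module ℂ S'] [IsScalarTower ℝ ℂ S']
    [FiniteDimensional ℂ S'] [Nontrivial S']
    (h : LinearMap.BilinForm ℝ V) (hsymm : h.IsSymm) (hnd : h.Nondegenerate)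
    (h' : LinearMap.BilinForm ℝ V') (hsymm' : h'.IsSymm) (hnd' : h'.Nondegenerate)
    (γ : CliffordAlgebra h.toQuadraticMap →ₐ[ℝ] Module.End ℂ S)
    (γ' : CliffordAlgebra h'.toQuadraticMap →ₐ[ℝ] Module.End ℂ S')
    (hγ : WeaklyFaithful h.toQuadraticMap γ) (hγ' : WeaklyFaithful h'.toQuadraticMap γ')
    (φ : S ≃ₗ[ℂ] S')
    (hconj : conjMap φ '' gammaV h.toQuadraticMap γ = gammaV h'.toQuadraticMap γ') :
    -- existence and uniqueness of the linear map `φ₀`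
    (∃! φ₀ : V →ₗ[ℝ] V', ∀ v : V,
        γ' (CliffordAlgebra.ι h'.toQuadraticMap (φ₀ v)) =
          conjMap φ (γ (CliffordAlgebra.ι h.toQuadraticMap v))) ∧
    -- any such `φ₀` is a bijective isometry and `(φ₀,φ)` is an isomorphism of
    -- complex Clifford representations
    (∀ φ₀ : V →ₗ[ℝ] V',
        (∀ v : V, γ' (CliffordAlgebra.ι h'.toQuadraticMap (φ₀ v)) =
          conjMap φ (γ (CliffordAlgebra.ι h.toQuadraticMap v))) →
        Function.Bijective φ₀ ∧ (∀ v w : V, h' (φ₀ v) (φ₀ w) = h v w) ∧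
        IsRepMor h h' γ γ' φ₀ φ.toLinearMap ∧
        -- `φ₀` is the unique isometry for which `(φ₀,φ)` is a morphism
        (∀ ψ₀ : V →ₗ[ℝ] V', IsRepMor h h' γ γ' ψ₀ φ.toLinearMap → ψ₀ = φ₀)) := by
  classical
  let f : V →ₗ[ℝ] Module.End ℂ S := γ.toLinearMap ∘ₗ CliffordAlgebra.ι h.toQuadraticMap
  let f' : V' →ₗ[ℝ] Module.End ℂ S' := γ'.toLinearMap ∘ₗ CliffordAlgebra.ι h'.toQuadraticMap
  have hf' : Function.Injective f' := fun a b hab => hγ' hab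
  let c : Module.End ℂ S →ₐ[ℝ] Module.End ℂ S' := CpxCliffordRepAux.conjAlg φ
  have hc : ∀ A, c A = conjMap φ A := fun A => CpxCliffordRepAux.conjAlg_apply φ A
  let g : V →ₗ[ℝ] Module.End ℂ S' := c.toLinearMap ∘ₗ f
  have hgdef : g = c.toLinearMap ∘ₗ f := rfl
  have hg : ∀ v, g v = conjMap φ (γ (CliffordAlgebra.ι h.toQuadraticMap v)) := fun v => hc _
  have hrange : ∀ v : V, g v ∈ LinearMap.range f' := by
    intro v
    have hmem : g v ∈ gammaV h'.toQuadraticMap γ' := by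
      rw [← hconj]
      exact ⟨γ (CliffordAlgebra.ι h.toQuadraticMap v), ⟨v, rfl⟩, (hg v).symm⟩
    obtain ⟨w, hw⟩ := hmem
    exact ⟨w, hw⟩
  have hrange' : ∀ v' : V', ∃ v : V, g v = f' v' := by
    intro v'
    have hmem : f' v' ∈ conjMap φ '' gammaV h.toQuadraticMap γ := by
      rw [hconj]; exact ⟨v', rfl⟩
    obtain ⟨A, ⟨v, hv⟩, hA⟩ := hmem
    exact ⟨v, by rw [hg]; rw [← hv] at hA; exact hA⟩
  -- the canonical φ₀
  let e := LinearEquiv.ofInjective f' hf'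
  let φc : V →ₗ[ℝ] V' :=
    e.symm.toLinearMap ∘ₗ g.codRestrict (LinearMap.range f') hrange
  have hφc : ∀ v, f' (φc v) = g v := by
    intro v
    have h1 : (e (φc v) : Module.End ℂ S') = g v := by
      show (e (e.symm ⟨g v, hrange v⟩) : Module.End ℂ S') = g v
      rw [e.apply_symm_apply]
    rwa [LinearEquiv.ofInjective_apply] at h1
  have hprop : ∀ v : V, γ' (CliffordAlgebra.ι h'.toQuadraticMap (φc v)) =
      conjMap φ (γ (CliffordAlgebra.ι h.toQuadraticMap v)) := fun v => (hφc v).trans (hg v)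
  -- key facts for an arbitrary φ₀ satisfying the property
  have main : ∀ φ₀ : V →ₗ[ℝ] V',
      (∀ v : V, γ' (CliffordAlgebra.ι h'.toQuadraticMap (φ₀ v)) =
        conjMap φ (γ (CliffordAlgebra.ι h.toQuadraticMap v))) →
      Function.Bijective φ₀ ∧ (∀ v w : V, h' (φ₀ v) (φ₀ w) = h v w) ∧
      IsRepMor h h' γ γ' φ₀ φ.toLinearMap ∧
      (∀ ψ₀ : V →ₗ[ℝ] V', IsRepMor h h' γ γ' ψ₀ φ.toLinearMap → ψ₀ = φ₀) := by
    intro φ₀ hP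
    have hPf : ∀ v, f' (φ₀ v) = g v := fun v => (hP v).trans (hg v).symm
    have cinj : Function.Injective (conjMap φ) := by
      intro A B hAB
      ext s
      have := LinearMap.congr_fun hAB (φ s)
      simpa [conjMap] using this
    have hinj : Function.Injective φ₀ := by
      intro a b hab
      apply hγ
      show γ (CliffordAlgebra.ι h.toQuadraticMap a) = γ (CliffordAlgebra.ι h.toQuadraticMap b)
      apply cinj
      rw [← hg a, ← hg b, ← hPf a, ← hPf b, hab]
    have hsurj : Function.Surjective φ₀ := by
      intro v'
      obtain ⟨v, hv⟩ := hrange' v'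
      exact ⟨v, hf' ((hPf v).trans (hv.trans rfl))⟩
    -- quadratic form preservation
    have hQpres : ∀ v, h'.toQuadraticMap (φ₀ v) = h.toQuadraticMap v := by
      intro v
      apply CpxCliffordRepAux.scal_inj (S' := S')
      calc algebraMap ℝ (Module.End ℂ S') (h'.toQuadraticMap (φ₀ v))
          = γ' (algebraMap ℝ _ (h'.toQuadraticMap (φ₀ v))) := (γ'.commutes _).symm
        _ = γ' (CliffordAlgebra.ι h'.toQuadraticMap (φ₀ v) * CliffordAlgebra.ι h'.toQuadraticMap (φ₀ v)) := by
            rw [CliffordAlgebra.ι_sq_scalar]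
        _ = f' (φ₀ v) * f' (φ₀ v) := by rw [map_mul]; rfl
        _ = c (γ (CliffordAlgebra.ι h.toQuadraticMap v)) * c (γ (CliffordAlgebra.ι h.toQuadraticMap v)) := by
            rw [hPf v]; rw [hgdef]; rfl
        _ = c (γ (CliffordAlgebra.ι h.toQuadraticMap v * CliffordAlgebra.ι h.toQuadraticMap v)) := by
            rw [map_mul, map_mul]
        _ = c (γ (algebraMap ℝ _ (h.toQuadraticMap v))) := by rw [CliffordAlgebra.ι_sq_scalar]
        _ = algebraMap ℝ _ (h.toQuadraticMap v) := by rw [γ.commutes, c.commutes]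
    have hQapp : ∀ v : V, h.toQuadraticMap v = h v v := fun v => rfl
    have hQ'app : ∀ v' : V', h'.toQuadraticMap v' = h' v' v' := fun v' => rfl
    have hbil : ∀ v w : V, h' (φ₀ v) (φ₀ w) = h v w := by
      intro v w
      have h1 := hQpres (v + w)
      have h2 := hQpres v
      have h3 := hQpres w
      rw [hQapp, hQ'app] at h1 h2 h3
      rw [map_add, map_add] at h1
      simp only [LinearMap.add_apply, map_add] at h1
      have hs : h w v = h v w := by
        have := hsymm.eq w v; simpa using this
      have hs' : h' (φ₀ w) (φ₀ v) = h' (φ₀ v) (φ₀ w) := by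
        have := hsymm'.eq (φ₀ w) (φ₀ v); simpa using this
      linarith
    -- the Clifford algebra morphism
    let iso : QuadraticMap.Isometry h.toQuadraticMap h'.toQuadraticMap := { toLinearMap := φ₀, map_app' := hQpres }
    let Φ : CliffordAlgebra h.toQuadraticMap →ₐ[ℝ] CliffordAlgebra h'.toQuadraticMap := CliffordAlgebra.map iso
    have hΦι : ∀ v, Φ (CliffordAlgebra.ι h.toQuadraticMap v) = CliffordAlgebra.ι h'.toQuadraticMap (φ₀ v) := by
      intro v
      rw [CliffordAlgebra.map_apply_ι]
      rfl
    have hcomm : γ'.comp Φ = c.comp γ := by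
      apply CliffordAlgebra.hom_ext
      ext v
      simp only [AlgHom.comp_toLinearMap, LinearMap.comp_apply, AlgHom.toLinearMap_apply]
      rw [hΦι, hP v, hc]
    have hmor : IsRepMor h h' γ γ' φ₀ φ.toLinearMap := by
      refine ⟨hbil, Φ, hΦι, fun x => ?_⟩
      have hx : γ' (Φ x) = c (γ x) := AlgHom.congr_fun hcomm x
      rw [hx, hc]
      ext s
      simp [conjMap]
    refine ⟨⟨hinj, hsurj⟩, hbil, hmor, ?_⟩
    intro ψ₀ hψ
    obtain ⟨_, Ψ, hΨι, hΨcom⟩ := hψ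
    ext v
    apply hγ'
    show γ' (CliffordAlgebra.ι h'.toQuadraticMap (ψ₀ v)) = γ' (CliffordAlgebra.ι h'.toQuadraticMap (φ₀ v))
    have h1 := hΨcom (CliffordAlgebra.ι h.toQuadraticMap v)
    rw [hΨι v] at h1
    rw [hP v]
    ext s'
    have h2 := LinearMap.congr_fun h1 (φ.symm s')
    simp only [LinearMap.comp_apply, LinearEquiv.coe_coe, LinearEquiv.apply_symm_apply] at h2
    simpa [conjMap] using h2
  refine ⟨⟨φc, hprop, ?_⟩, main⟩
  intro ψ hψ
  ext v
  apply hf'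
  show f' (ψ v) = f' (φc v)
  rw [hφc v, hg v]
  exact hψ v
end
end

section
/- Let γ: Cl(V,h) → End_ℂ(S) be a weakly faithful complex Clifford representation. Then the map sending an automorphism (φ₀,φ) of γ (an isomorphism of complex Clifford representations from γ to itself) to its second component φ is a group isomorphism from the automorphism group of γ onto the complex Lipschitz group L_γ = {φ ∈ Aut_ℂ(S) : φ∘γ(ι(V))∘φ^{-1} = γ(ι(V))}. -/
noncomputable section

section LipAux

open CpxCliffordRep CliffordAlgebra

set_option linter.unusedSectionVars false

variable {V : Type*} [AddCommGroup V] [Module ℝ V]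
  {S : Type*} [AddCommGroup S] [Module ℝ S] [Module ℂ S] [IsScalarTower ℝ ℂ S]

lemma lipaux_conjMap_apply (φ : S ≃ₗ[ℂ] S) (A : Module.End ℂ S) (s : S) :
    conjMap φ A s = φ (A (φ.symm s)) := rfl

lemma lipaux_equiv_real_smul (φ : S ≃ₗ[ℂ] S) (r : ℝ) (x : S) : φ (r • x) = r • φ x := by
  rw [← algebraMap_smul ℂ r x, map_smul, algebraMap_smul]

lemma lipaux_conjMap_mul (φ : S ≃ₗ[ℂ] S) (A B : Module.End ℂ S) :
    conjMap φ (A * B) = conjMap φ A * conjMap φ B := by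
  ext s; simp [lipaux_conjMap_apply, Module.End.mul_apply]

lemma lipaux_conjMap_add (φ : S ≃ₗ[ℂ] S) (A B : Module.End ℂ S) :
    conjMap φ (A + B) = conjMap φ A + conjMap φ B := by
  ext s; simp [lipaux_conjMap_apply, LinearMap.add_apply]

lemma lipaux_conjMap_smul (φ : S ≃ₗ[ℂ] S) (r : ℝ) (A : Module.End ℂ S) :
    conjMap φ (r • A) = r • conjMap φ A := by
  ext s
  simp [lipaux_conjMap_apply, LinearMap.smul_apply, lipaux_equiv_real_smul]

lemma lipaux_conjMap_algebraMap (φ : S ≃ₗ[ℂ] S) (r : ℝ) :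
    conjMap φ (algebraMap ℝ (Module.End ℂ S) r) = algebraMap ℝ (Module.End ℂ S) r := by
  ext s
  rw [lipaux_conjMap_apply, Module.algebraMap_end_apply, Module.algebraMap_end_apply,
    lipaux_equiv_real_smul, φ.apply_symm_apply]

lemma lipaux_conjMap_injective (φ : S ≃ₗ[ℂ] S) :
    Function.Injective (conjMap φ : Module.End ℂ S → Module.End ℂ S) := by
  intro A B hAB
  ext s
  have h2 := LinearMap.congr_fun hAB (φ s)
  rw [lipaux_conjMap_apply, lipaux_conjMap_apply, φ.symm_apply_apply] at h2
  exact φ.injective h2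

lemma lipaux_conjMap_eq_of_comm (φ : S ≃ₗ[ℂ] S) (A B : Module.End ℂ S)
    (hAB : B ∘ₗ (φ : S →ₗ[ℂ] S) = (φ : S →ₗ[ℂ] S) ∘ₗ A) : conjMap φ A = B := by
  ext s
  have h2 := LinearMap.congr_fun hAB (φ.symm s)
  simp only [LinearMap.comp_apply, LinearEquiv.coe_coe, φ.apply_symm_apply] at h2
  rw [lipaux_conjMap_apply, ← h2]

lemma lipaux_memLip_of (Q : QuadraticForm ℝ V) (γ : CliffordAlgebra Q →ₐ[ℝ] Module.End ℂ S)
    (φ : S ≃ₗ[ℂ] S) (g : V → V) (hgsurj : Function.Surjective g)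
    (hc : ∀ v, conjMap φ (γ (CliffordAlgebra.ι Q v)) = γ (CliffordAlgebra.ι Q (g v))) :
    memLip Q γ φ := by
  unfold memLip gammaV
  apply subset_antisymm
  · rintro A ⟨B, ⟨v, rfl⟩, rfl⟩
    exact ⟨g v, (hc v).symm⟩
  · rintro A ⟨w, rfl⟩
    obtain ⟨v, rfl⟩ := hgsurj w
    exact ⟨γ (CliffordAlgebra.ι Q v), ⟨v, rfl⟩, hc v⟩

lemma lipaux_algebraMap_end_inj [Nontrivial S] {r r' : ℝ}
    (hrr : algebraMap ℝ (Module.End ℂ S) r = algebraMap ℝ (Module.End ℂ S) r') : r = r' := by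
  obtain ⟨s, hs⟩ := exists_ne (0 : S)
  have h1 : r • s = r' • s := by
    simpa [Module.algebraMap_end_apply] using LinearMap.congr_fun hrr s
  have h2 : ((r : ℂ)) • s = ((r' : ℂ)) • s := by
    rwa [← algebraMap_smul ℂ r s, ← algebraMap_smul ℂ r' s, Complex.coe_algebraMap] at h1
  have h3 : ((r : ℂ) - r') • s = 0 := by rw [sub_smul, h2, sub_self]
  have h4 := (smul_eq_zero.mp h3).resolve_right hs
  exact_mod_cast sub_eq_zero.mp h4

end LipAux



open CpxCliffordRep in
/-- For a weakly faithful complex Clifford representation `γ`, the map sending an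
automorphism `(φ₀,φ)` of `γ` to its second component `φ` is a group isomorphism from the
automorphism group of `γ` onto the complex Lipschitz group
`L_γ = {φ ∈ Aut_ℂ(S) : φ∘γ(ι(V))∘φ⁻¹ = γ(ι(V))}`: it is well defined into `L_γ`,
multiplicative (automorphisms compose componentwise), injective (the first component is
uniquely determined by the second) and surjective onto `L_γ`. -/
theorem automorphism_group_iso_lipschitz_group
    {V : Type*} [AddCommGroup V] [Module ℝ V] [FiniteDimensional ℝ V]
    {S : Type*} [AddCommGroup S] [Module ℝ S] [Module ℂ S] [IsScalarTower ℝ ℂ S]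
    [FiniteDimensional ℂ S] [Nontrivial S]
    (h : LinearMap.BilinForm ℝ V) (hsymm : h.IsSymm) (hnd : h.Nondegenerate)
    (γ : CliffordAlgebra h.toQuadraticMap →ₐ[ℝ] Module.End ℂ S)
    (hγ : WeaklyFaithful h.toQuadraticMap γ) :
    -- well defined: the second component of any automorphism of `γ` lies in `L_γ`
    (∀ (φ₀ : V ≃ₗ[ℝ] V) (φ : S ≃ₗ[ℂ] S),
        IsRepMor h h γ γ φ₀.toLinearMap φ.toLinearMap → memLip h.toQuadraticMap γ φ) ∧
    -- multiplicative: automorphisms compose componentwise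
    (∀ (φ₀ ψ₀ : V ≃ₗ[ℝ] V) (φ ψ : S ≃ₗ[ℂ] S),
        IsRepMor h h γ γ φ₀.toLinearMap φ.toLinearMap →
        IsRepMor h h γ γ ψ₀.toLinearMap ψ.toLinearMap →
        IsRepMor h h γ γ (φ₀.toLinearMap ∘ₗ ψ₀.toLinearMap)
          (φ.toLinearMap ∘ₗ ψ.toLinearMap)) ∧
    -- injective: the first component is determined by the second
    (∀ (φ₀ ψ₀ : V ≃ₗ[ℝ] V) (φ : S ≃ₗ[ℂ] S),
        IsRepMor h h γ γ φ₀.toLinearMap φ.toLinearMap →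
        IsRepMor h h γ γ ψ₀.toLinearMap φ.toLinearMap → φ₀ = ψ₀) ∧
    -- surjective onto `L_γ`
    (∀ φ : S ≃ₗ[ℂ] S, memLip h.toQuadraticMap γ φ →
        ∃ φ₀ : V ≃ₗ[ℝ] V, IsRepMor h h γ γ φ₀.toLinearMap φ.toLinearMap) := by
  classical
  refine ⟨?_, ?_, ?_, ?_⟩
  · -- well defined
    rintro φ₀ φ ⟨-, Φ, hΦι, hΦ⟩
    refine lipaux_memLip_of _ γ φ (fun v => φ₀ v) (fun w => ⟨φ₀.symm w, by simp⟩) ?_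
    intro v
    apply lipaux_conjMap_eq_of_comm
    have h1 := hΦ (CliffordAlgebra.ι h.toQuadraticMap v)
    rw [hΦι] at h1
    exact h1
  · -- multiplicative
    rintro φ₀ ψ₀ φ ψ ⟨hiso1, Φ, hΦι, hΦ⟩ ⟨hiso2, Ψ, hΨι, hΨ⟩
    refine ⟨fun v w => ?_, Φ.comp Ψ, fun v => ?_, fun x => ?_⟩
    · simp only [LinearMap.comp_apply]
      rw [hiso1, hiso2]
    · simp only [AlgHom.comp_apply, LinearMap.comp_apply]
      rw [hΨι, hΦι]
    · calc γ ((Φ.comp Ψ) x) ∘ₗ ((φ : S →ₗ[ℂ] S) ∘ₗ (ψ : S →ₗ[ℂ] S))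
          = (γ (Φ (Ψ x)) ∘ₗ (φ : S →ₗ[ℂ] S)) ∘ₗ (ψ : S →ₗ[ℂ] S) := by
            rw [AlgHom.comp_apply, LinearMap.comp_assoc]
        _ = ((φ : S →ₗ[ℂ] S) ∘ₗ γ (Ψ x)) ∘ₗ (ψ : S →ₗ[ℂ] S) := by rw [hΦ]
        _ = (φ : S →ₗ[ℂ] S) ∘ₗ (γ (Ψ x) ∘ₗ (ψ : S →ₗ[ℂ] S)) := by rw [LinearMap.comp_assoc]
        _ = (φ : S →ₗ[ℂ] S) ∘ₗ ((ψ : S →ₗ[ℂ] S) ∘ₗ γ x) := by rw [hΨ]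
        _ = ((φ : S →ₗ[ℂ] S) ∘ₗ (ψ : S →ₗ[ℂ] S)) ∘ₗ γ x := by rw [LinearMap.comp_assoc]
  · -- injective
    rintro φ₀ ψ₀ φ ⟨-, Φ, hΦι, hΦ⟩ ⟨-, Ψ, hΨι, hΨ⟩
    have key : ∀ v : V, φ₀ v = ψ₀ v := by
      intro v
      apply hγ
      show γ (CliffordAlgebra.ι h.toQuadraticMap (φ₀ v))
          = γ (CliffordAlgebra.ι h.toQuadraticMap (ψ₀ v))
      have h1 := hΦ (CliffordAlgebra.ι h.toQuadraticMap v)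
      rw [hΦι] at h1
      have h2 := hΨ (CliffordAlgebra.ι h.toQuadraticMap v)
      rw [hΨι] at h2
      have h3 := h1.trans h2.symm
      ext s
      have h4 := LinearMap.congr_fun h3 (φ.symm s)
      simpa using h4
    exact LinearEquiv.ext key
  · -- surjective
    intro φ hφ
    have hmem : ∀ v : V, ∃ w : V, γ (CliffordAlgebra.ι h.toQuadraticMap w)
        = conjMap φ (γ (CliffordAlgebra.ι h.toQuadraticMap v)) := by
      intro v
      have hx : conjMap φ (γ (CliffordAlgebra.ι h.toQuadraticMap v))
          ∈ gammaV h.toQuadraticMap γ := by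
        rw [← hφ]
        exact ⟨γ (CliffordAlgebra.ι h.toQuadraticMap v), ⟨v, rfl⟩, rfl⟩
      exact hx
    choose g hg using hmem
    have hadd : ∀ v w, g (v + w) = g v + g w := by
      intro v w
      apply hγ
      show γ (CliffordAlgebra.ι h.toQuadraticMap (g (v + w)))
          = γ (CliffordAlgebra.ι h.toQuadraticMap (g v + g w))
      simp only [hg, map_add, lipaux_conjMap_add]
    have hsmul : ∀ (r : ℝ) (v : V), g (r • v) = r • g v := by
      intro r v
      apply hγ
      show γ (CliffordAlgebra.ι h.toQuadraticMap (g (r • v)))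
          = γ (CliffordAlgebra.ι h.toQuadraticMap (r • g v))
      simp only [hg, map_smul, lipaux_conjMap_smul]
    let L : V →ₗ[ℝ] V := { toFun := g, map_add' := hadd, map_smul' := hsmul }
    have hgL : ∀ v, γ (CliffordAlgebra.ι h.toQuadraticMap (L v))
        = conjMap φ (γ (CliffordAlgebra.ι h.toQuadraticMap v)) := hg
    have hLinj : Function.Injective L := by
      intro v w hvw
      apply hγ
      apply lipaux_conjMap_injective φ
      show conjMap φ (γ (CliffordAlgebra.ι h.toQuadraticMap v))
          = conjMap φ (γ (CliffordAlgebra.ι h.toQuadraticMap w))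
      rw [← hgL, ← hgL, hvw]
    have hLsurj : Function.Surjective L := by
      intro w
      have hx : γ (CliffordAlgebra.ι h.toQuadraticMap w)
          ∈ conjMap φ '' gammaV h.toQuadraticMap γ := by
        rw [hφ]; exact ⟨w, rfl⟩
      obtain ⟨A, ⟨v, rfl⟩, hv⟩ := hx
      exact ⟨v, hγ (show γ (CliffordAlgebra.ι h.toQuadraticMap (L v))
        = γ (CliffordAlgebra.ι h.toQuadraticMap w) from (hgL v).trans hv)⟩
    have hQL : ∀ v, h.toQuadraticMap (L v) = h.toQuadraticMap v := by
      intro v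
      apply lipaux_algebraMap_end_inj (S := S)
      calc algebraMap ℝ (Module.End ℂ S) (h.toQuadraticMap (L v))
          = γ (algebraMap ℝ _ (h.toQuadraticMap (L v))) := (γ.commutes _).symm
        _ = γ (CliffordAlgebra.ι h.toQuadraticMap (L v)
              * CliffordAlgebra.ι h.toQuadraticMap (L v)) := by
            rw [CliffordAlgebra.ι_sq_scalar]
        _ = γ (CliffordAlgebra.ι h.toQuadraticMap (L v))
              * γ (CliffordAlgebra.ι h.toQuadraticMap (L v)) := map_mul γ _ _
        _ = conjMap φ (γ (CliffordAlgebra.ι h.toQuadraticMap v))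
              * conjMap φ (γ (CliffordAlgebra.ι h.toQuadraticMap v)) := by rw [hgL]
        _ = conjMap φ (γ (CliffordAlgebra.ι h.toQuadraticMap v)
              * γ (CliffordAlgebra.ι h.toQuadraticMap v)) := (lipaux_conjMap_mul _ _ _).symm
        _ = conjMap φ (γ (CliffordAlgebra.ι h.toQuadraticMap v
              * CliffordAlgebra.ι h.toQuadraticMap v)) := by rw [map_mul]
        _ = conjMap φ (γ (algebraMap ℝ _ (h.toQuadraticMap v))) := by
            rw [CliffordAlgebra.ι_sq_scalar]
        _ = conjMap φ (algebraMap ℝ _ (h.toQuadraticMap v)) := by rw [γ.commutes]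
        _ = algebraMap ℝ _ (h.toQuadraticMap v) := lipaux_conjMap_algebraMap _ _
    have hiso : ∀ v w, h (L v) (L w) = h v w := by
      intro v w
      have e1 := hQL (v + w)
      have e2 := hQL v
      have e3 := hQL w
      simp only [map_add, LinearMap.BilinMap.toQuadraticMap_apply, LinearMap.add_apply] at e1 e2 e3
      have s1 : h (L v) (L w) = h (L w) (L v) := by simpa using hsymm.eq (L v) (L w)
      have s2 : h v w = h w v := by simpa using hsymm.eq v w
      linarith
    have hf : ∀ v : V, (CliffordAlgebra.ι h.toQuadraticMap ∘ₗ L) v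
        * (CliffordAlgebra.ι h.toQuadraticMap ∘ₗ L) v
        = algebraMap ℝ (CliffordAlgebra h.toQuadraticMap) (h.toQuadraticMap v) := by
      intro v
      simp only [LinearMap.comp_apply, CliffordAlgebra.ι_sq_scalar, hQL]
    set Φ := CliffordAlgebra.lift h.toQuadraticMap ⟨CliffordAlgebra.ι h.toQuadraticMap ∘ₗ L, hf⟩
      with hΦdef
    have hΦι : ∀ v, Φ (CliffordAlgebra.ι h.toQuadraticMap v)
        = CliffordAlgebra.ι h.toQuadraticMap (L v) := fun v =>
      CliffordAlgebra.lift_ι_apply _ _ v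
    have hcomm : ∀ x : CliffordAlgebra h.toQuadraticMap, ∀ s : S,
        γ (Φ x) (φ s) = φ (γ x s) := by
      intro x
      induction x using CliffordAlgebra.induction with
      | algebraMap r =>
        intro s
        rw [AlgHom.commutes, AlgHom.commutes, Module.algebraMap_end_apply,
          Module.algebraMap_end_apply, lipaux_equiv_real_smul]
      | ι v =>
        intro s
        rw [hΦι, hgL, lipaux_conjMap_apply, φ.symm_apply_apply]
      | mul x y hx hy =>
        intro s
        rw [map_mul, map_mul, map_mul, Module.End.mul_apply, Module.End.mul_apply, hy, hx]
      | add x y hx hy =>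
        intro s
        rw [map_add, map_add, map_add, LinearMap.add_apply, LinearMap.add_apply, hx, hy,
          map_add]
    refine ⟨LinearEquiv.ofBijective L ⟨hLinj, hLsurj⟩, fun v w => hiso v w, Φ,
      fun v => hΦι v, fun x => LinearMap.ext fun s => hcomm x s⟩
end
end

section
/- Let γ: Cl(V,h) → End_ℂ(S) be a weakly faithful complex Clifford representation. Then for every φ ∈ L_γ the automorphism Ad_γ(φ) of V is an isometry of (V,h), and Ad_γ: L_γ → O(V,h) is a group homomorphism. Moreover, if dim V is even then Ad_γ is surjective onto O(V,h), and if dim V is odd then the image of Ad_γ contains SO(V,h). -/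
noncomputable section

namespace AdjointAux

open CpxCliffordRep Module CliffordAlgebra
set_option linter.unusedSectionVars false

universe u

section ConjMapLemmas
variable {S : Type*} [AddCommGroup S] [Module ℝ S] [Module ℂ S] [IsScalarTower ℝ ℂ S]

lemma conjMap_apply (φ : S ≃ₗ[ℂ] S) (A : Module.End ℂ S) (s : S) :
    conjMap φ A s = φ (A (φ.symm s)) := rfl

lemma conjMap_add (φ : S ≃ₗ[ℂ] S) (A B : Module.End ℂ S) :
    conjMap φ (A + B) = conjMap φ A + conjMap φ B := by
  ext s; simp [conjMap_apply]

lemma conjMap_rsmul (φ : S ≃ₗ[ℂ] S) (r : ℝ) (A : Module.End ℂ S) :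
    conjMap φ (r • A) = r • conjMap φ A := by
  ext s
  simp only [conjMap_apply, LinearMap.smul_apply]
  rw [← algebraMap_smul ℂ r (A (φ.symm s)), ← algebraMap_smul ℂ r (φ (A (φ.symm s))), map_smul]

lemma conjMap_mul (φ : S ≃ₗ[ℂ] S) (A B : Module.End ℂ S) :
    conjMap φ (A * B) = conjMap φ A * conjMap φ B := by
  ext s
  simp [conjMap_apply, Module.End.mul_apply]

lemma conjMap_algebraMap (φ : S ≃ₗ[ℂ] S) (r : ℝ) :
    conjMap φ (algebraMap ℝ (Module.End ℂ S) r) = algebraMap ℝ (Module.End ℂ S) r := by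
  ext s
  rw [conjMap_apply]
  rw [Module.algebraMap_end_apply, Module.algebraMap_end_apply]
  rw [← algebraMap_smul ℂ r (φ.symm s), ← algebraMap_smul ℂ r s, map_smul,
    φ.apply_symm_apply]

lemma conjMap_refl (A : Module.End ℂ S) : conjMap (LinearEquiv.refl ℂ S) A = A := by
  ext s; rfl

lemma conjMap_trans (φ ψ : S ≃ₗ[ℂ] S) (A : Module.End ℂ S) :
    conjMap (φ.trans ψ) A = conjMap ψ (conjMap φ A) := by
  ext s; rfl

lemma real_smul_inj {r : ℝ} {s : S} (hs : s ≠ 0) (hr : r • s = 0) : r = 0 := by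
  have h1 : (algebraMap ℝ ℂ r) • s = 0 := by rwa [algebraMap_smul]
  rcases smul_eq_zero.mp h1 with h2 | h2
  · exact (map_eq_zero (algebraMap ℝ ℂ)).mp h2
  · exact absurd h2 hs
end ConjMapLemmas

section CD
variable {V : Type u} [AddCommGroup V] [Module ℝ V]

def rfl' (h : LinearMap.BilinForm ℝ V) (u : V) : V →ₗ[ℝ] V :=
  LinearMap.id - (h u).smulRight ((2 / h u u) • u)

lemma rfl'_apply (h : LinearMap.BilinForm ℝ V) (u v : V) :
    rfl' h u v = v - (h u v * (2 / h u u)) • u := by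
  simp [rfl', smul_smul]

variable {h : LinearMap.BilinForm ℝ V}

lemma rfl'_self {u : V} (hu : h u u ≠ 0) : rfl' h u u = -u := by
  have h2 : h u u * (2 / h u u) = 2 := by field_simp
  rw [rfl'_apply, h2]; module

lemma rfl'_ortho {u v : V} (hv : h u v = 0) : rfl' h u v = v := by
  simp [rfl'_apply, hv]

lemma rfl'_isometry (hsymm : h.IsSymm) {u : V} (hu : h u u ≠ 0) (v w : V) :
    h (rfl' h u v) (rfl' h u w) = h v w := by
  have hvu : h v u = h u v := by rw [← hsymm.eq u v]
  have hwu : h w u = h u w := by rw [← hsymm.eq u w]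
  rw [rfl'_apply, rfl'_apply]
  simp only [map_sub, map_smul, LinearMap.sub_apply, LinearMap.smul_apply, smul_eq_mul, hvu, hwu]
  field_simp
  ring

lemma rfl'_invol {u : V} (hu : h u u ≠ 0) (v : V) : rfl' h u (rfl' h u v) = v := by
  have hvu : h u (rfl' h u v) = - h u v := by
    rw [rfl'_apply]
    simp only [map_sub, map_smul, smul_eq_mul]
    field_simp
    ring
  rw [rfl'_apply, hvu, rfl'_apply]
  module

/-- product of reflections along a list of vectors -/
def rprod (h : LinearMap.BilinForm ℝ V) (l : List V) : V →ₗ[ℝ] V :=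
  (l.map (rfl' h)).prod

lemma rprod_nil : rprod h ([] : List V) = LinearMap.id := rfl

lemma rprod_cons (u : V) (l : List V) :
    rprod h (u :: l) = rfl' h u ∘ₗ rprod h l := by
  simp [rprod, List.prod_cons]; rfl

lemma rprod_append (l₁ l₂ : List V) :
    rprod h (l₁ ++ l₂) = rprod h l₁ ∘ₗ rprod h l₂ := by
  simp [rprod, List.prod_append]; rfl

lemma rprod_isometry (hsymm : h.IsSymm) {l : List V} (hl : ∀ u ∈ l, h u u ≠ 0)
    (v w : V) : h (rprod h l v) (rprod h l w) = h v w := by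
  induction l with
  | nil => rfl
  | cons u t ih =>
      rw [rprod_cons]
      simp only [LinearMap.comp_apply]
      rw [rfl'_isometry hsymm (hl u (List.mem_cons_self))]
      exact ih fun x hx => hl x (List.mem_cons_of_mem u hx)

lemma rprod_reverse_comp {l : List V} (hl : ∀ u ∈ l, h u u ≠ 0) :
    rprod h l ∘ₗ rprod h l.reverse = LinearMap.id := by
  induction l with
  | nil => rfl
  | cons u t ih =>
      have ht : ∀ x ∈ t, h x x ≠ 0 := fun x hx => hl x (List.mem_cons_of_mem u hx)
      rw [List.reverse_cons, rprod_cons, rprod_append]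
      ext v
      have ht := ht
      have h1 : rprod h [u] v = rfl' h u v := by simp [rprod]
      simp only [LinearMap.comp_apply, h1]
      have := LinearMap.congr_fun (ih ht) (rfl' h u v)
      simp only [LinearMap.comp_apply, LinearMap.id_apply] at this
      rw [this, rfl'_invol (hl u (List.mem_cons_self)), LinearMap.id_apply]

lemma rprod_comp_reverse {l : List V} (hl : ∀ u ∈ l, h u u ≠ 0) :
    rprod h l.reverse ∘ₗ rprod h l = LinearMap.id := by
  have := rprod_reverse_comp (l := l.reverse) (fun u hu => hl u (List.mem_reverse.mp hu))
  rwa [List.reverse_reverse] at this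

/-- alignment: two vectors of the same nonzero "norm" differ by a product of reflections. -/
lemma align (hsymm : h.IsSymm) {x y : V} (hxy : h x x = h y y) (hy : h y y ≠ 0) :
    ∃ l : List V, (∀ u ∈ l, h u u ≠ 0) ∧ rprod h l x = y := by
  have sxy : h y x = h x y := by rw [← hsymm.eq x y]
  by_cases hd : h (x - y) (x - y) ≠ 0
  · refine ⟨[x - y], by simpa using hd, ?_⟩
    have h1 : rprod h [x-y] x = rfl' h (x-y) x := by simp [rprod]
    rw [h1, rfl'_apply]
    have hnum : h (x - y) x = h x x - h x y := by
      simp only [map_sub, LinearMap.sub_apply]; rw [sxy]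
    have hden : h (x - y) (x - y) = 2 * (h x x - h x y) := by
      simp only [map_sub, LinearMap.sub_apply]; rw [sxy, hxy]; ring
    rw [hnum, hden]
    have hne : h x x - h x y ≠ 0 := by
      intro h0; apply hd; rw [hden, h0, mul_zero]
    have : (h x x - h x y) * (2 / (2 * (h x x - h x y))) = 1 := by field_simp
    rw [this, one_smul]; abel
  · push_neg at hd
    have hxyx : h x y = h x x := by
      have : h (x - y) (x - y) = 2 * h x x - 2 * h x y := by
        simp only [map_sub, LinearMap.sub_apply]; rw [sxy, hxy]; ring
      rw [this] at hd; linarith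
    have hs : h (x + y) (x + y) = 4 * h x x := by
      simp only [map_add, LinearMap.add_apply]; rw [sxy, hxy, hxyx]; rw [← hxy]; ring
    have hsne : h (x + y) (x + y) ≠ 0 := by rw [hs, hxy]; simpa using hy
    refine ⟨[y, x + y], ?_, ?_⟩
    · intro u hu
      simp only [List.mem_cons, List.not_mem_nil, or_false, List.mem_singleton] at hu
      rcases hu with rfl | rfl
      · exact hy
      · exact hsne
    · have h2 : rprod h [y, x+y] x = rfl' h y (rfl' h (x+y) x) := by
        simp [rprod, List.prod_cons]
      rw [h2]
      have hnum : h (x + y) x = 2 * h x x := by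
        simp only [map_add, LinearMap.add_apply]; rw [sxy, hxyx]; ring
      have hrefl : rfl' h (x+y) x = -y := by
        rw [rfl'_apply, hnum, hs]
        have hxx : h x x ≠ 0 := by rwa [hxy]
        have : 2 * h x x * (2 / (4 * h x x)) = 1 := by field_simp; ring
        rw [this, one_smul]; abel
      rw [hrefl, map_neg, rfl'_self hy, neg_neg]

theorem cartan_dieudonne : ∀ (n : ℕ) (V : Type u) [AddCommGroup V] [Module ℝ V]
    [FiniteDimensional ℝ V] (h : LinearMap.BilinForm ℝ V), h.IsSymm → h.Nondegenerate →
    finrank ℝ V = n → ∀ f : V ≃ₗ[ℝ] V, (∀ v w, h (f v) (f w) = h v w) →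
    ∃ l : List V, (∀ u ∈ l, h u u ≠ 0) ∧ rprod h l = f.toLinearMap := by
  intro n
  induction n with
  | zero =>
      intro V _ _ _ h _ _ hrk f _
      have : Subsingleton V := by
        rw [finrank_zero_iff] at hrk; exact hrk
      exact ⟨[], by simp, by ext v; exact Subsingleton.elim _ _⟩
  | succ n ih =>
      intro V _ _ _ h hsymm hnd hrk f hf
      have hVnt : Nontrivial V := finrank_pos_iff (R := ℝ).mp (by omega)
      -- anisotropic vector
      have hB0 : h ≠ 0 := by
        intro h0
        obtain ⟨x, hx⟩ := exists_ne (0 : V)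
        exact hx (hnd.1 x (by simp [h0]))
      obtain ⟨v, hv⟩ := LinearMap.BilinForm.exists_bilinForm_self_ne_zero hB0 (LinearMap.BilinForm.isSymm_iff.mp hsymm)
      -- align f v with v
      have hfv : h (f v) (f v) = h v v := hf v v
      obtain ⟨l₀, hl₀, hl₀v⟩ := align hsymm hfv hv
      -- the corrected isometry g fixing v
      let e : V ≃ₗ[ℝ] V := LinearEquiv.ofLinear (rprod h l₀) (rprod h l₀.reverse)
        (rprod_reverse_comp hl₀) (rprod_comp_reverse hl₀)
      let g : V ≃ₗ[ℝ] V := f.trans e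
      have hg : ∀ x, g x = rprod h l₀ (f x) := fun x => rfl
      have hgv : g v = v := by rw [hg]; exact hl₀v
      have hgiso : ∀ a b, h (g a) (g b) = h a b := by
        intro a b; rw [hg, hg, rprod_isometry hsymm hl₀, hf]
      -- orthogonal complement
      set W := h.orthogonal (ℝ ∙ v) with hWdef
      have hvv : ¬ h.IsOrtho v v := hv
      have hc : IsCompl (ℝ ∙ v) W := LinearMap.BilinForm.isCompl_span_singleton_orthogonal hvv
      have hWnd : (h.restrict W).Nondegenerate :=
        h.restrict_nondegenerate_orthogonal_spanSingleton hnd hsymm.isRefl hvv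
      have hWsymm : (h.restrict W).IsSymm := by
        constructor
        intro a b
        simp only [LinearMap.BilinForm.restrict_apply]
        exact hsymm.eq _ _
      have hv0 : v ≠ 0 := by
        rintro rfl
        apply hv
        simp [LinearMap.IsOrtho]
      have hWrk : finrank ℝ W = n := by
        have := Submodule.finrank_add_eq_of_isCompl hc
        rw [finrank_span_singleton hv0, hrk] at this
        omega
      have hmemW : ∀ x, x ∈ W ↔ h v x = 0 := by
        intro x
        constructor
        · intro hx; exact hx v (Submodule.mem_span_singleton_self v)
        · intro hx n hn
          obtain ⟨c, rfl⟩ := Submodule.mem_span_singleton.mp hn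
          simp [LinearMap.BilinForm.IsOrtho, hx]
      -- g maps W to W
      have hgW : ∀ x ∈ W, g x ∈ W := by
        intro x hx
        rw [hmemW] at hx ⊢
        rw [← hgv, hgiso, hx]
      have hgsv : g.symm v = v := by
        conv_lhs => rw [← hgv]
        exact g.symm_apply_apply v
      have hgWrev : ∀ x ∈ W, g.symm x ∈ W := by
        intro x hx
        rw [hmemW] at hx ⊢
        have h2 := hgiso (g.symm v) (g.symm x)
        rw [g.apply_symm_apply, g.apply_symm_apply, hgsv] at h2
        rw [← h2]
        exact hx
      have hmap : W.map (g : V →ₗ[ℝ] V) = W := by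
        apply le_antisymm
        · rintro _ ⟨x, hx, rfl⟩; exact hgW x hx
        · intro x hx
          exact ⟨g.symm x, hgWrev x hx, g.apply_symm_apply x⟩
      let gW : W ≃ₗ[ℝ] W := (g.submoduleMap W).trans (LinearEquiv.ofEq _ _ hmap)
      have hgWapp : ∀ x : W, (gW x : V) = g (x : V) := fun x => rfl
      have hgWiso : ∀ a b : W, (h.restrict W) (gW a) (gW b) = (h.restrict W) a b := by
        intro a b
        simp only [LinearMap.BilinForm.restrict_apply, hgWapp]
        exact hgiso _ _
      obtain ⟨lW, hlW, hlWprod⟩ := ih W (h.restrict W) hWsymm hWnd hWrk gW hgWiso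
      -- lift the list to V
      set lV : List V := lW.map (Subtype.val) with hlVdef
      have hlV : ∀ u ∈ lV, h u u ≠ 0 := by
        intro u hu
        obtain ⟨w, hw, rfl⟩ := List.mem_map.mp hu
        exact hlW w hw
      have hlift : ∀ lW' : List ↥W, (∀ u ∈ lW', (h.restrict W) u u ≠ 0) →
          (∀ x : W, rprod h (lW'.map Subtype.val) (x : V)
            = ((rprod (h.restrict W) lW' x : W) : V))
          ∧ rprod h (lW'.map Subtype.val) v = v := by
        intro lW'
        induction lW' with
        | nil => exact fun _ => ⟨fun x => rfl, rfl⟩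
        | cons u t iht =>
            intro hanis
            have ht' : ∀ x ∈ t, (h.restrict W) x x ≠ 0 :=
              fun x hx => hanis x (List.mem_cons_of_mem u hx)
            have ihh := iht ht'
            have huv : h (u : V) v = 0 := by
              have h1 : h v (u : V) = 0 := (hmemW _).mp u.2
              rw [← hsymm.eq v (u : V)]
              exact h1
            have hustep : ∀ x : W, rfl' h (u : V) (x : V) = ((rfl' (h.restrict W) u x : W) : V) := by
              intro x
              rw [rfl'_apply, rfl'_apply]
              simp only [LinearMap.BilinForm.restrict_apply]
              push_cast
              ring_nf
              rfl
            constructor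
            · intro x
              simp only [List.map_cons]
              rw [rprod_cons, rprod_cons]
              simp only [LinearMap.comp_apply]
              rw [ihh.1 x, hustep]
            · simp only [List.map_cons]
              rw [rprod_cons]
              simp only [LinearMap.comp_apply]
              rw [ihh.2, rfl'_ortho huv]
      -- rprod h lV = g
      have hPg : rprod h lV = (g : V →ₗ[ℝ] V) := by
        ext x
        have hx : x ∈ (ℝ ∙ v) ⊔ W := by rw [hc.sup_eq_top]; trivial
        obtain ⟨y, hy, z, hz, rfl⟩ := Submodule.mem_sup.mp hx
        obtain ⟨c, rfl⟩ := Submodule.mem_span_singleton.mp hy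
        have h1 : (rprod h lV) (c • v + z) = c • v + ((rprod (h.restrict W) lW) ⟨z, hz⟩ : V) := by
          rw [map_add, map_smul, (hlift lW hlW).2, (hlift lW hlW).1 ⟨z, hz⟩]
        have h2 : ((rprod (h.restrict W) lW) ⟨z, hz⟩ : V) = g z := by
          rw [hlWprod]; rfl
        rw [h1, h2]
        simp only [LinearEquiv.coe_coe, map_add, map_smul, hgv]
      -- conclude : f = e.symm ∘ g
      refine ⟨l₀.reverse ++ lV, ?_, ?_⟩
      · intro u hu
        rcases List.mem_append.mp hu with h1 | h1
        · exact hl₀ u (List.mem_reverse.mp h1)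
        · exact hlV u h1
      · rw [rprod_append, hPg]
        ext x
        simp only [LinearMap.comp_apply, LinearEquiv.coe_coe]
        have : g x = rprod h l₀ (f x) := rfl
        rw [this]
        have := LinearMap.congr_fun (rprod_comp_reverse hl₀) (f x)
        simp only [LinearMap.comp_apply, LinearMap.id_apply] at this
        rw [this]
end CD

section Det
variable {V : Type*} [AddCommGroup V] [Module ℝ V] {h : LinearMap.BilinForm ℝ V}

lemma rfl'_det [FiniteDimensional ℝ V] {u : V} (hu : h u u ≠ 0) :
    LinearMap.det (rfl' h u) = -1 := by
  classical
  set W := h.orthogonal (ℝ ∙ u) with hW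
  have hc : IsCompl (ℝ ∙ u) W := LinearMap.BilinForm.isCompl_span_singleton_orthogonal hu
  have hu0 : u ≠ 0 := fun h0 => hu (by simp [h0])
  have h1 : finrank ℝ (ℝ ∙ u) = 1 := finrank_span_singleton hu0
  let b₁ : Basis (Fin 1) ℝ (ℝ ∙ u) := Module.basisUnique (Fin 1) h1
  let b₂ : Basis (Fin (finrank ℝ W)) ℝ W := Module.finBasis ℝ W
  let e : ((ℝ ∙ u) × W) ≃ₗ[ℝ] V := Submodule.prodEquivOfIsCompl _ _ hc
  let b : Basis (Fin 1 ⊕ Fin (finrank ℝ W)) ℝ V := (b₁.prod b₂).map e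
  set ε : Fin 1 ⊕ Fin (finrank ℝ W) → ℝ := Sum.elim (fun _ => (-1:ℝ)) (fun _ => 1) with hε
  have key : ∀ i, rfl' h u (b i) = ε i • b i := by
    rintro (j | j)
    · have hb : (b (Sum.inl j)) = ((b₁ j : V)) := by
        simp [b, Basis.prod_apply, e, Submodule.coe_prodEquivOfIsCompl]
      obtain ⟨c, hcu⟩ := Submodule.mem_span_singleton.mp (b₁ j).2
      rw [hb, ← hcu, map_smul, rfl'_self hu]
      simp [hε]
    · have hb : (b (Sum.inr j)) = ((b₂ j : V)) := by
        simp [b, Basis.prod_apply, e, Submodule.coe_prodEquivOfIsCompl]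
      have hm : h u (b₂ j : V) = 0 := (b₂ j).2 u (Submodule.mem_span_singleton_self u)
      rw [hb, rfl'_ortho hm]
      simp [hε]
  rw [← LinearMap.det_toMatrix b]
  have : LinearMap.toMatrix b b (rfl' h u) = Matrix.diagonal ε := by
    ext i j
    rw [LinearMap.toMatrix_apply, key j, map_smul]
    simp [Matrix.diagonal, Basis.repr_self_apply, eq_comm]
    rcases eq_or_ne i j with rfl | hne
    · simp
    · simp [hne, Ne.symm hne]
  rw [this, Matrix.det_diagonal, Fintype.prod_sum_type]
  simp [hε]
end Det

section NR
variable {V : Type*} [AddCommGroup V] [Module ℝ V]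

def nrprod (h : LinearMap.BilinForm ℝ V) (l : List V) : V →ₗ[ℝ] V :=
  (l.map fun u => -(rfl' h u)).prod

lemma nrprod_cons (h : LinearMap.BilinForm ℝ V) (u : V) (l : List V) :
    nrprod h (u :: l) = -(rfl' h u) ∘ₗ nrprod h l := by
  simp [nrprod, List.prod_cons]; rfl

lemma rprod_cons' (h : LinearMap.BilinForm ℝ V) (u : V) (l : List V) :
    rprod h (u :: l) = rfl' h u ∘ₗ rprod h l := by
  simp [rprod, List.prod_cons]; rfl

lemma nrprod_eq (h : LinearMap.BilinForm ℝ V) (l : List V) :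
    nrprod h l = ((-1 : ℝ) ^ l.length) • rprod h l := by
  induction l with
  | nil => simp [nrprod, rprod]
  | cons u t ih =>
      have h1 : nrprod h (u :: t) = -(rfl' h u) * nrprod h t := by
        simp [nrprod, List.prod_cons]
      have h2 : rprod h (u :: t) = rfl' h u * rprod h t := by
        simp [rprod, List.prod_cons]
      rw [h1, h2, ih, mul_smul_comm, neg_mul, List.length_cons, pow_succ]
      rw [mul_smul, neg_one_smul]

lemma rprod_det [FiniteDimensional ℝ V] {h : LinearMap.BilinForm ℝ V}
    (hdet : ∀ u : V, h u u ≠ 0 → LinearMap.det (rfl' h u) = -1)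
    {l : List V} (hl : ∀ u ∈ l, h u u ≠ 0) :
    LinearMap.det (rprod h l) = (-1 : ℝ) ^ l.length := by
  induction l with
  | nil => simp [rprod]
  | cons u t ih =>
      rw [rprod_cons', LinearMap.det_comp, ih (fun x hx => hl x (List.mem_cons_of_mem u hx)),
        hdet u (hl u (List.mem_cons_self)), List.length_cons, pow_succ]
      ring

section Rep

variable {S : Type*} [AddCommGroup S] [Module ℝ S] [Module ℂ S] [IsScalarTower ℝ ℂ S]
  {h : LinearMap.BilinForm ℝ V}
  (γ : CliffordAlgebra h.toQuadraticMap →ₐ[ℝ] Module.End ℂ S)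

lemma conjMap_apply' (φ : S ≃ₗ[ℂ] S) (A : Module.End ℂ S) (s : S) :
    conjMap φ A s = φ (A (φ.symm s)) := rfl

lemma conjMap_refl' (A : Module.End ℂ S) : conjMap (LinearEquiv.refl ℂ S) A = A := by
  ext s; rfl

lemma conjMap_trans' (φ ψ : S ≃ₗ[ℂ] S) (A : Module.End ℂ S) :
    conjMap (φ.trans ψ) A = conjMap ψ (conjMap φ A) := by
  ext s; rfl

lemma gi_mul_self (v : V) :
    γ (ι h.toQuadraticMap v) * γ (ι h.toQuadraticMap v)
      = algebraMap ℝ (Module.End ℂ S) (h v v) := by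
  rw [← map_mul, CliffordAlgebra.ι_sq_scalar, AlgHom.commutes,
    LinearMap.BilinMap.toQuadraticMap_apply]

def giEquiv {u : V} (hu : h u u ≠ 0) : S ≃ₗ[ℂ] S :=
  LinearEquiv.ofLinear (γ (ι h.toQuadraticMap u)) ((h u u)⁻¹ • γ (ι h.toQuadraticMap u))
    (by
      show γ (ι h.toQuadraticMap u) * ((h u u)⁻¹ • γ (ι h.toQuadraticMap u)) = 1
      rw [mul_smul_comm, gi_mul_self, Algebra.algebraMap_eq_smul_one, smul_smul,
        inv_mul_cancel₀ hu, one_smul])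
    (by
      show ((h u u)⁻¹ • γ (ι h.toQuadraticMap u)) * γ (ι h.toQuadraticMap u) = 1
      rw [smul_mul_assoc, gi_mul_self, Algebra.algebraMap_eq_smul_one, smul_smul,
        inv_mul_cancel₀ hu, one_smul])

lemma ι_conj (hsymm : h.IsSymm) (u v : V) :
    ι h.toQuadraticMap u * ι h.toQuadraticMap v * ι h.toQuadraticMap u
      = (2 * h u v) • ι h.toQuadraticMap u - (h u u) • ι h.toQuadraticMap v := by
  have h1 := CliffordAlgebra.ι_mul_ι_add_swap (Q := h.toQuadraticMap) u v
  have hp : QuadraticMap.polar (h.toQuadraticMap) u v = 2 * h u v := by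
    rw [LinearMap.BilinMap.polar_toQuadraticMap]
    have hvu : h v u = h u v := by rw [← hsymm.eq u v]
    rw [hvu]; ring
  have h2 : ι h.toQuadraticMap u * ι h.toQuadraticMap v
      = algebraMap ℝ _ (2 * h u v) - ι h.toQuadraticMap v * ι h.toQuadraticMap u := by
    rw [← hp]; exact eq_sub_of_add_eq h1
  calc ι h.toQuadraticMap u * ι h.toQuadraticMap v * ι h.toQuadraticMap u
      = (algebraMap ℝ _ (2 * h u v) - ι h.toQuadraticMap v * ι h.toQuadraticMap u)
          * ι h.toQuadraticMap u := by rw [h2]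
    _ = algebraMap ℝ _ (2 * h u v) * ι h.toQuadraticMap u
          - ι h.toQuadraticMap v * (ι h.toQuadraticMap u * ι h.toQuadraticMap u) := by
        rw [sub_mul, mul_assoc]
    _ = (2 * h u v) • ι h.toQuadraticMap u
          - ι h.toQuadraticMap v * algebraMap ℝ _ (h u u) := by
        rw [CliffordAlgebra.ι_sq_scalar, LinearMap.BilinMap.toQuadraticMap_apply,
          ← Algebra.smul_def]
    _ = (2 * h u v) • ι h.toQuadraticMap u - (h u u) • ι h.toQuadraticMap v := by
        rw [← Algebra.commutes, ← Algebra.smul_def]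

lemma sLin_apply (u v : V) : (-(rfl' h u)) v = (2 * h u v / h u u) • u - v := by
  have : (-(rfl' h u)) v = -(rfl' h u v) := rfl
  rw [this, rfl'_apply, neg_sub]
  congr 1
  ring

lemma conj_giEquiv (hsymm : h.IsSymm) {u : V} (hu : h u u ≠ 0) (v : V) :
    conjMap (giEquiv γ hu) (γ (ι h.toQuadraticMap v))
      = γ (ι h.toQuadraticMap ((-(rfl' h u)) v)) := by
  have h0 : conjMap (giEquiv γ hu) (γ (ι h.toQuadraticMap v))
      = γ (ι h.toQuadraticMap u) * γ (ι h.toQuadraticMap v)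
        * ((h u u)⁻¹ • γ (ι h.toQuadraticMap u)) := rfl
  rw [h0, mul_smul_comm, ← map_mul, ← map_mul, ι_conj hsymm u v, map_sub, map_smul, map_smul,
    smul_sub, smul_smul, smul_smul, inv_mul_cancel₀ hu, one_smul]
  have hr : ((h u u)⁻¹ * (2 * h u v)) = 2 * h u v / h u u := by
    rw [inv_mul_eq_div]
  rw [hr]
  have hrhs : γ (ι h.toQuadraticMap ((-(rfl' h u)) v))
      = (2 * h u v / h u u) • γ (ι h.toQuadraticMap u) - γ (ι h.toQuadraticMap v) := by
    rw [sLin_apply, map_sub, map_smul, map_sub, map_smul]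
  rw [hrhs]

lemma exists_phi (hsymm : h.IsSymm) (l : List V) (hl : ∀ u ∈ l, h u u ≠ 0) :
    ∃ φ : S ≃ₗ[ℂ] S, ∀ v : V,
      conjMap φ (γ (ι h.toQuadraticMap v)) = γ (ι h.toQuadraticMap (nrprod h l v)) := by
  induction l with
  | nil => exact ⟨LinearEquiv.refl ℂ S, fun v => by rw [conjMap_refl']; rfl⟩
  | cons u t ih =>
      obtain ⟨φt, hφt⟩ := ih (fun x hx => hl x (List.mem_cons_of_mem u hx))
      refine ⟨φt.trans (giEquiv γ (hl u (List.mem_cons_self))), fun v => ?_⟩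
      rw [conjMap_trans', hφt, conj_giEquiv γ hsymm, nrprod_cons]
      rfl

lemma memLip_of (φ : S ≃ₗ[ℂ] S) (g : V →ₗ[ℝ] V)
    (hg : ∀ v : V, conjMap φ (γ (ι h.toQuadraticMap v)) = γ (ι h.toQuadraticMap (g v)))
    (hgs : Function.Surjective g) : memLip h.toQuadraticMap γ φ := by
  unfold memLip gammaV
  ext A
  simp only [Set.mem_image, Set.mem_range]
  constructor
  · rintro ⟨B, ⟨v, rfl⟩, rfl⟩
    exact ⟨g v, (hg v).symm⟩
  · rintro ⟨v, rfl⟩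
    obtain ⟨w, hw⟩ := hgs v
    exact ⟨γ (ι h.toQuadraticMap w), ⟨w, rfl⟩, by rw [hg w, hw]⟩

end Rep
end NR

section Basis
variable {V : Type*} [AddCommGroup V] [Module ℝ V] {h : LinearMap.BilinForm ℝ V}

lemma rprod_basis (hnd : h.Nondegenerate) {n : ℕ} (b : Basis (Fin n) ℝ V)
    (hortho : h.IsOrthoᵢ b) (l : List (Fin n)) (hnodup : l.Nodup) (j : Fin n) :
    rprod h (l.map b) (b j) = (if j ∈ l then (-1 : ℝ) else 1) • b j := by
  induction l with
  | nil => simp [rprod]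
  | cons i t ih =>
      have hnd2 := (List.nodup_cons.mp hnodup).2
      have hni := (List.nodup_cons.mp hnodup).1
      rw [List.map_cons, rprod_cons]
      simp only [LinearMap.comp_apply]
      rw [ih hnd2, map_smul]
      rcases eq_or_ne i j with rfl | hij
      · rw [if_neg (by exact fun hm => hni hm)]
        rw [one_smul, rfl'_self (LinearMap.BilinForm.iIsOrtho.not_isOrtho_basis_self_of_nondegenerate hortho hnd i),
          if_pos (List.mem_cons_self)]
        module
      · rw [rfl'_ortho (hortho hij)]
        by_cases hjt : j ∈ t
        · rw [if_pos hjt, if_pos (List.mem_cons_of_mem i hjt)]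
        · rw [if_neg hjt, if_neg (by
            intro hm
            rcases List.mem_cons.mp hm with hh | hh
            · exact hij hh.symm
            · exact hjt hh)]

lemma rprod_neg_id (hnd : h.Nondegenerate) {n : ℕ} (b : Basis (Fin n) ℝ V)
    (hortho : h.IsOrthoᵢ b) :
    rprod h ((List.finRange n).map b) = -LinearMap.id := by
  apply b.ext
  intro j
  rw [rprod_basis hnd b hortho (List.finRange n) (List.nodup_finRange n) j,
    if_pos (List.mem_finRange j)]
  simp

lemma isometry_of_qpres (hsymm : h.IsSymm) (f : V →ₗ[ℝ] V)
    (hq : ∀ v, h (f v) (f v) = h v v) (v w : V) : h (f v) (f w) = h v w := by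
  have h1 := hq (v + w)
  simp only [map_add, LinearMap.add_apply] at h1
  have h2 := hq v
  have h3 := hq w
  have s1 : h (f w) (f v) = h (f v) (f w) := by rw [← hsymm.eq (f v) (f w)]
  have s2 : h w v = h v w := by rw [← hsymm.eq v w]
  linarith
end Basis

end AdjointAux

open AdjointAux in
open CpxCliffordRep in
/-- For weakly faithful `γ`, every `φ ∈ L_γ` induces a unique linear map `Ad_γ(φ)` of `V`,
which is a bijective isometry of `(V,h)`; `Ad_γ` is a group homomorphism `L_γ → O(V,h)`;
if `dim V` is even then `Ad_γ` is surjective onto `O(V,h)`, and if `dim V` is odd then its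
image contains `SO(V,h)`. -/
theorem adjoint_rep_isometry_hom_and_image
    {V : Type*} [AddCommGroup V] [Module ℝ V] [FiniteDimensional ℝ V]
    {S : Type*} [AddCommGroup S] [Module ℝ S] [Module ℂ S] [IsScalarTower ℝ ℂ S]
    [FiniteDimensional ℂ S] [Nontrivial S]
    (h : LinearMap.BilinForm ℝ V) (hsymm : h.IsSymm) (hnd : h.Nondegenerate)
    (γ : CliffordAlgebra h.toQuadraticMap →ₐ[ℝ] Module.End ℂ S)
    (hγ : WeaklyFaithful h.toQuadraticMap γ) :
    -- existence and uniqueness of `Ad_γ(φ)`, which is a bijective isometry of `(V,h)`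
    (∀ φ : S ≃ₗ[ℂ] S, memLip h.toQuadraticMap γ φ →
        (∃! f : V →ₗ[ℝ] V, ∀ v : V,
            γ (CliffordAlgebra.ι h.toQuadraticMap (f v)) =
              conjMap φ (γ (CliffordAlgebra.ι h.toQuadraticMap v))) ∧
        (∀ f : V →ₗ[ℝ] V,
            (∀ v : V, γ (CliffordAlgebra.ι h.toQuadraticMap (f v)) =
              conjMap φ (γ (CliffordAlgebra.ι h.toQuadraticMap v))) →
            Function.Bijective f ∧ ∀ v w : V, h (f v) (f w) = h v w)) ∧
    -- `Ad_γ` is a group homomorphism: it sends composition to composition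
    (∀ (φ ψ : S ≃ₗ[ℂ] S), memLip h.toQuadraticMap γ φ → memLip h.toQuadraticMap γ ψ →
        ∀ (f g : V →ₗ[ℝ] V),
        (∀ v : V, γ (CliffordAlgebra.ι h.toQuadraticMap (f v)) =
            conjMap φ (γ (CliffordAlgebra.ι h.toQuadraticMap v))) →
        (∀ v : V, γ (CliffordAlgebra.ι h.toQuadraticMap (g v)) =
            conjMap ψ (γ (CliffordAlgebra.ι h.toQuadraticMap v))) →
        memLip h.toQuadraticMap γ (ψ.trans φ) ∧
        (∀ v : V, γ (CliffordAlgebra.ι h.toQuadraticMap ((f ∘ₗ g) v)) =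
            conjMap (ψ.trans φ) (γ (CliffordAlgebra.ι h.toQuadraticMap v)))) ∧
    -- even dimension: `Ad_γ` is surjective onto `O(V,h)`
    (Module.finrank ℝ V % 2 = 0 →
        ∀ f : V ≃ₗ[ℝ] V, (∀ v w : V, h (f v) (f w) = h v w) →
          ∃ φ : S ≃ₗ[ℂ] S, memLip h.toQuadraticMap γ φ ∧
            ∀ v : V, γ (CliffordAlgebra.ι h.toQuadraticMap (f v)) =
              conjMap φ (γ (CliffordAlgebra.ι h.toQuadraticMap v))) ∧
    -- odd dimension: the image of `Ad_γ` contains `SO(V,h)`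
    (Module.finrank ℝ V % 2 = 1 →
        ∀ f : V ≃ₗ[ℝ] V, (∀ v w : V, h (f v) (f w) = h v w) →
          LinearMap.det f.toLinearMap = 1 →
          ∃ φ : S ≃ₗ[ℂ] S, memLip h.toQuadraticMap γ φ ∧
            ∀ v : V, γ (CliffordAlgebra.ι h.toQuadraticMap (f v)) =
              conjMap φ (γ (CliffordAlgebra.ι h.toQuadraticMap v))) := by
  classical
  -- common facts
  have keyQ : ∀ (φ : S ≃ₗ[ℂ] S) (f : V →ₗ[ℝ] V),
      (∀ v : V, γ (CliffordAlgebra.ι h.toQuadraticMap (f v)) =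
        conjMap φ (γ (CliffordAlgebra.ι h.toQuadraticMap v))) →
      ∀ v, h (f v) (f v) = h v v := by
    intro φ f hfφ v
    have e1 : algebraMap ℝ (Module.End ℂ S) (h (f v) (f v))
        = algebraMap ℝ (Module.End ℂ S) (h v v) := by
      rw [← gi_mul_self γ (f v), hfφ v, ← conjMap_mul, gi_mul_self γ v, conjMap_algebraMap]
    obtain ⟨s, hs⟩ := exists_ne (0 : S)
    have e2 : h (f v) (f v) • s = h v v • s := by
      have := congrArg (fun A : Module.End ℂ S => A s) e1
      simpa [Module.algebraMap_end_apply] using this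
    have e3 : (h (f v) (f v) - h v v) • s = 0 := by rw [sub_smul, e2, sub_self]
    have := real_smul_inj hs e3
    linarith
  have keyIso : ∀ (φ : S ≃ₗ[ℂ] S) (f : V →ₗ[ℝ] V),
      (∀ v : V, γ (CliffordAlgebra.ι h.toQuadraticMap (f v)) =
        conjMap φ (γ (CliffordAlgebra.ι h.toQuadraticMap v))) →
      Function.Bijective f ∧ ∀ v w : V, h (f v) (f w) = h v w := by
    intro φ f hfφ
    have hq := keyQ φ f hfφ
    have hiso := isometry_of_qpres hsymm f hq
    have h0 : ∀ x, f x = 0 → x = 0 := by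
      intro x hx
      apply hnd.1
      intro w
      rw [← hiso x w, hx]
      simp
    have hinj : Function.Injective f := by
      intro a b hab
      have := h0 (a - b) (by rw [map_sub, hab, sub_self])
      rwa [sub_eq_zero] at this
    exact ⟨⟨hinj, LinearMap.injective_iff_surjective.mp hinj⟩, hiso⟩
  -- the builder for parts 3 and 4
  have build : ∀ (l : List V), (∀ u ∈ l, h u u ≠ 0) → ∀ (f : V ≃ₗ[ℝ] V),
      nrprod h l = f.toLinearMap →
      ∃ φ : S ≃ₗ[ℂ] S, memLip h.toQuadraticMap γ φ ∧
        ∀ v : V, γ (CliffordAlgebra.ι h.toQuadraticMap (f v)) =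
          conjMap φ (γ (CliffordAlgebra.ι h.toQuadraticMap v)) := by
    intro l hl f hnr
    obtain ⟨φ, hφconj⟩ := exists_phi γ hsymm l hl
    have hconj : ∀ v : V, conjMap φ (γ (CliffordAlgebra.ι h.toQuadraticMap v))
        = γ (CliffordAlgebra.ι h.toQuadraticMap (f.toLinearMap v)) := by
      intro v
      rw [hφconj v, hnr]
    refine ⟨φ, memLip_of γ φ f.toLinearMap hconj ?_, fun v => (hconj v).symm⟩
    intro y
    obtain ⟨x, hx⟩ := f.surjective y
    exact ⟨x, hx⟩
  refine ⟨?_, ?_, ?_, ?_⟩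
  · -- Part 1
    intro φ hφ
    have hmem : ∀ v : V, ∃ w : V,
        γ (CliffordAlgebra.ι h.toQuadraticMap w)
          = conjMap φ (γ (CliffordAlgebra.ι h.toQuadraticMap v)) := by
      intro v
      have hv : conjMap φ (γ (CliffordAlgebra.ι h.toQuadraticMap v))
          ∈ gammaV h.toQuadraticMap γ := by
        rw [← hφ]
        exact Set.mem_image_of_mem _ ⟨v, rfl⟩
      obtain ⟨w, hw⟩ := hv
      exact ⟨w, hw⟩
    choose F hF using hmem
    have hadd : ∀ a b : V, F (a + b) = F a + F b := by
      intro a b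
      apply hγ
      show γ (CliffordAlgebra.ι h.toQuadraticMap (F (a + b)))
        = γ (CliffordAlgebra.ι h.toQuadraticMap (F a + F b))
      rw [hF (a + b),
        show CliffordAlgebra.ι h.toQuadraticMap (a + b)
          = CliffordAlgebra.ι h.toQuadraticMap a + CliffordAlgebra.ι h.toQuadraticMap b from
          map_add _ _ _,
        map_add γ, conjMap_add, ← hF a, ← hF b, ← map_add γ, ← map_add]
    have hsmul : ∀ (r : ℝ) (a : V), F (r • a) = r • F a := by
      intro r a
      apply hγ
      show γ (CliffordAlgebra.ι h.toQuadraticMap (F (r • a)))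
        = γ (CliffordAlgebra.ι h.toQuadraticMap (r • F a))
      rw [hF (r • a),
        show CliffordAlgebra.ι h.toQuadraticMap (r • a)
          = r • CliffordAlgebra.ι h.toQuadraticMap a from map_smul _ _ _,
        map_smul γ, conjMap_rsmul, ← hF a, ← map_smul γ, ← map_smul]
    let f₀ : V →ₗ[ℝ] V :=
      { toFun := F
        map_add' := hadd
        map_smul' := hsmul }
    have hf₀ : ∀ v : V, γ (CliffordAlgebra.ι h.toQuadraticMap (f₀ v))
        = conjMap φ (γ (CliffordAlgebra.ι h.toQuadraticMap v)) := hF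
    refine ⟨⟨f₀, hf₀, ?_⟩, fun f hf => keyIso φ f hf⟩
    intro g hg
    ext v
    apply hγ
    show γ (CliffordAlgebra.ι h.toQuadraticMap (g v))
      = γ (CliffordAlgebra.ι h.toQuadraticMap (f₀ v))
    rw [hg v, hf₀ v]
  · -- Part 2
    intro φ ψ hφ hψ f g hfφ hgψ
    constructor
    · unfold memLip at hφ hψ ⊢
      have himg : conjMap (ψ.trans φ) '' gammaV h.toQuadraticMap γ
          = conjMap φ '' (conjMap ψ '' gammaV h.toQuadraticMap γ) := by
        rw [← Set.image_comp]
        exact Set.image_congr fun A _ => conjMap_trans' ψ φ A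
      rw [himg, hψ, hφ]
    · intro v
      have hcomp : (f ∘ₗ g) v = f (g v) := rfl
      rw [hcomp, hfφ (g v), hgψ v]
      exact (conjMap_trans' ψ φ _).symm
  · -- Part 3 : even dimension
    intro hpar f hf
    obtain ⟨l, hl, hlprod⟩ :=
      cartan_dieudonne (Module.finrank ℝ V) V h hsymm hnd rfl f hf
    rcases Nat.even_or_odd l.length with he | ho
    · apply build l hl f
      rw [nrprod_eq, hlprod, Even.neg_one_pow he, one_smul]
    · haveI : Invertible (2 : ℝ) := invertibleOfNonzero two_ne_zero
      obtain ⟨b, hb⟩ := LinearMap.BilinForm.exists_orthogonal_basis (LinearMap.BilinForm.isSymm_iff.mp hsymm)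
      have hbne : ∀ i, h (b i) (b i) ≠ 0 := fun i =>
        LinearMap.BilinForm.iIsOrtho.not_isOrtho_basis_self_of_nondegenerate hb hnd i
      set lb : List V := (List.finRange (Module.finrank ℝ V)).map b with hlbdef
      have hlb : ∀ u ∈ lb, h u u ≠ 0 := by
        intro u hu
        obtain ⟨i, _, rfl⟩ := List.mem_map.mp hu
        exact hbne i
      have hneg : rprod h lb = -LinearMap.id := rprod_neg_id hnd b hb
      have hl' : ∀ u ∈ l ++ lb, h u u ≠ 0 := by
        intro u hu
        rcases List.mem_append.mp hu with h1 | h1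
        · exact hl u h1
        · exact hlb u h1
      apply build (l ++ lb) hl' f
      have hlen : (l ++ lb).length = l.length + Module.finrank ℝ V := by
        simp [hlbdef]
      have hsgn : ((-1 : ℝ)) ^ (l ++ lb).length = -1 := by
        rw [hlen, pow_add, Odd.neg_one_pow ho, Even.neg_one_pow (Nat.even_iff.mpr hpar)]
        ring
      rw [nrprod_eq, hsgn, rprod_append, hlprod, hneg]
      ext x
      simp
  · -- Part 4 : odd dimension
    intro _ f hf hdet
    obtain ⟨l, hl, hlprod⟩ :=
      cartan_dieudonne (Module.finrank ℝ V) V h hsymm hnd rfl f hf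
    have hde : ((-1 : ℝ)) ^ l.length = 1 := by
      rw [← rprod_det (fun u hu => rfl'_det hu) hl, hlprod, hdet]
    have he : Even l.length := by
      have hne : (-1 : ℝ) ≠ 1 := by norm_num
      exact (neg_one_pow_eq_one_iff_even hne).mp hde
    apply build l hl f
    rw [nrprod_eq, hlprod, Even.neg_one_pow he, one_smul]
end
end
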